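/- arXiv:1410.7191 — 2 statements merged into one kernel-verified Lean document; each statement's English description precedes it below -/
import Mathlib

section
/- Ramanujan's identity for E₂: the normalized quasimodular Eisenstein series satisfies q dE₂/dq = (E₂² − E₄)/12, i.e., (1/2πi) dE₂/dτ = (E₂² − E₄)/12. -/
open Complex Real

/-- The normalized quasimodular Eisenstein series E₂, via its q-expansion. -/
noncomputable def E2 (τ : ℂ) : ℂ :=
  1 - 24 * ∑' n : ℕ, (ArithmeticFunction.sigma 1 (n + 1) : ℂ) *
    Complex.exp (2 * (π : ℂ) * Complex.I * τ) ^ (n + 1)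

/-- The normalized Eisenstein series E₄, via its q-expansion. -/
noncomputable def E4 (τ : ℂ) : ℂ :=
  1 + 240 * ∑' n : ℕ, (ArithmeticFunction.sigma 3 (n + 1) : ℂ) *
    Complex.exp (2 * (π : ℂ) * Complex.I * τ) ^ (n + 1)

/-- The normalized Eisenstein series E₆, via its q-expansion. -/
noncomputable def E6 (τ : ℂ) : ℂ :=
  1 - 504 * ∑' n : ℕ, (ArithmeticFunction.sigma 5 (n + 1) : ℂ) *
    Complex.exp (2 * (π : ℂ) * Complex.I * τ) ^ (n + 1)

namespace RamanujanAux

open Finset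

/-- Index set: quadruples (a,x,b,y) of positive naturals with a*x + b*y = n. -/
def D (n : ℕ) : Finset ((ℕ × ℕ) × ℕ × ℕ) :=
  ((Icc 1 n ×ˢ Icc 1 n) ×ˢ Icc 1 n ×ˢ Icc 1 n).filter
    (fun p => p.1.1 * p.1.2 + p.2.1 * p.2.2 = n)

lemma mem_D {n : ℕ} {p : (ℕ × ℕ) × ℕ × ℕ} :
    p ∈ D n ↔ 1 ≤ p.1.1 ∧ 1 ≤ p.1.2 ∧ 1 ≤ p.2.1 ∧ 1 ≤ p.2.2 ∧
      p.1.1 * p.1.2 + p.2.1 * p.2.2 = n := by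
  obtain ⟨⟨a, x⟩, b, y⟩ := p
  simp only [D, mem_filter, mem_product, mem_Icc]
  constructor
  · rintro ⟨⟨⟨⟨ha, -⟩, hx, -⟩, ⟨hb, -⟩, hy, -⟩, hs⟩
    exact ⟨ha, hx, hb, hy, hs⟩
  · rintro ⟨ha, hx, hb, hy, hs⟩
    have h1 : a ≤ a * x := Nat.le_mul_of_pos_right a hx
    have h2 : x ≤ a * x := Nat.le_mul_of_pos_left x ha
    have h3 : b ≤ b * y := Nat.le_mul_of_pos_right b hy
    have h4 : y ≤ b * y := Nat.le_mul_of_pos_left y hb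
    exact ⟨⟨⟨⟨ha, by omega⟩, hx, by omega⟩, ⟨hb, by omega⟩, hy, by omega⟩, hs⟩

/-- Trichotomy splitting of a sum according to comparison of two coordinates. -/
lemma sum_split {ι : Type*} (s : Finset ι) (u v : ι → ℕ) (f : ι → ℤ) :
    ∑ p ∈ s, f p =
      ∑ p ∈ s.filter (fun p => v p < u p), f p +
      ∑ p ∈ s.filter (fun p => u p < v p), f p +
      ∑ p ∈ s.filter (fun p => u p = v p), f p := by
  classical
  have h1 := Finset.sum_filter_add_sum_filter_not s (fun p => v p < u p) f
  have h2 := Finset.sum_filter_add_sum_filter_not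
      (s.filter (fun p => ¬ v p < u p)) (fun p => u p < v p) f
  rw [Finset.filter_filter, Finset.filter_filter] at h2
  have e1 : s.filter (fun p => ¬ v p < u p ∧ u p < v p) = s.filter (fun p => u p < v p) := by
    apply Finset.filter_congr; intro p _; constructor <;> intro h <;> omega
  have e2 : s.filter (fun p => ¬ v p < u p ∧ ¬ u p < v p) = s.filter (fun p => u p = v p) := by
    apply Finset.filter_congr; intro p _; constructor <;> intro h <;> omega
  rw [e1, e2] at h2
  omega


/-- The swap (a,x,b,y) ↦ (b,y,a,x) turns the region x<y into y<x. -/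
lemma sum_swap_region (n : ℕ) (f : ((ℕ × ℕ) × ℕ × ℕ) → ℤ) :
    ∑ p ∈ (D n).filter (fun p => p.1.2 < p.2.2), f p
      = ∑ p ∈ (D n).filter (fun p => p.2.2 < p.1.2), f (p.2, p.1) := by
  apply Finset.sum_nbij' (fun p => (p.2, p.1)) (fun p => (p.2, p.1)) <;>
    rintro ⟨⟨a,x⟩,b,y⟩ hp <;>
    simp only [mem_filter, mem_D] at hp ⊢ <;> omega

lemma sum_swap_region' (n : ℕ) (f : ((ℕ × ℕ) × ℕ × ℕ) → ℤ) :
    ∑ p ∈ (D n).filter (fun p => p.2.1 < p.1.1), f p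
      = ∑ p ∈ (D n).filter (fun p => p.1.1 < p.2.1), f (p.2, p.1) := by
  apply Finset.sum_nbij' (fun p => (p.2, p.1)) (fun p => (p.2, p.1)) <;>
    rintro ⟨⟨a,x⟩,b,y⟩ hp <;>
    simp only [mem_filter, mem_D] at hp ⊢ <;> omega

/-- Euclidean-type bijection: {a < b} ≃ {y < x}, inverse (a,x,b,y) ↦ (a, x−y, a+b, y). -/
lemma sum_euclid (n : ℕ) (f : ((ℕ × ℕ) × ℕ × ℕ) → ℤ) :
    ∑ p ∈ (D n).filter (fun p => p.1.1 < p.2.1), f p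
      = ∑ p ∈ (D n).filter (fun p => p.2.2 < p.1.2),
          f ((p.1.1, p.1.2 - p.2.2), (p.1.1 + p.2.1, p.2.2)) := by
  apply Finset.sum_nbij' (fun p => ((p.1.1, p.1.2 + p.2.2), (p.2.1 - p.1.1, p.2.2)))
    (fun p => ((p.1.1, p.1.2 - p.2.2), (p.1.1 + p.2.1, p.2.2)))
  · rintro ⟨⟨a,x⟩,b,y⟩ hp
    simp only [mem_filter, mem_D] at hp ⊢
    obtain ⟨⟨ha, hx, hb, hy, hs⟩, hab⟩ := hp
    refine ⟨⟨ha, by omega, by omega, hy, ?_⟩, by omega⟩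
    have h2 : a * (x + y) + (b - a) * y = a * x + (a * y + (b - a) * y) := by ring
    rw [h2, ← Nat.add_mul, Nat.add_sub_cancel' hab.le]
    exact hs
  · rintro ⟨⟨a,x⟩,b,y⟩ hp
    simp only [mem_filter, mem_D] at hp ⊢
    obtain ⟨⟨ha, hx, hb, hy, hs⟩, hyx⟩ := hp
    refine ⟨⟨ha, by omega, by omega, hy, ?_⟩, by omega⟩
    have h2 : a * (x - y) + (a + b) * y = a * ((x - y) + y) + b * y := by ring
    rw [h2, Nat.sub_add_cancel hyx.le]
    exact hs
  · rintro ⟨⟨a,x⟩,b,y⟩ hp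
    simp only [mem_filter, mem_D] at hp
    simp only [Prod.mk.injEq]
    exact ⟨⟨trivial, by omega⟩, by omega, trivial⟩
  · rintro ⟨⟨a,x⟩,b,y⟩ hp
    simp only [mem_filter, mem_D] at hp
    simp only [Prod.mk.injEq]
    exact ⟨⟨trivial, by omega⟩, by omega, trivial⟩
  · rintro ⟨⟨a,x⟩,b,y⟩ hp
    simp only [mem_filter, mem_D] at hp
    have h2 : ((((a, x + y), (b - a, y)).1.1, ((a, x + y), (b - a, y)).1.2 - y),
        (a + (b - a), y)) = ((a,x),(b,y)) := by
      simp only [Prod.mk.injEq]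
      exact ⟨⟨trivial, by omega⟩, by omega, trivial⟩
    exact (congrArg f h2).symm


/-- Reindexing of the boundary region x = y by (d, a) with d ∣ n, 1 ≤ a < d. -/
lemma sum_E1 (n : ℕ) (f : ((ℕ × ℕ) × ℕ × ℕ) → ℤ) :
    ∑ p ∈ (D n).filter (fun p => p.1.2 = p.2.2), f p
      = ∑ d ∈ n.divisors, ∑ a ∈ Ico 1 d, f ((a, n / d), (d - a, n / d)) := by
  rw [Finset.sum_sigma']
  apply Finset.sum_nbij' (fun p => (⟨p.1.1 + p.2.1, p.1.1⟩ : Σ _ : ℕ, ℕ))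
    (fun q => ((q.2, n / q.1), (q.1 - q.2, n / q.1)))
  · rintro ⟨⟨a,x⟩,b,y⟩ hp
    simp only [mem_filter, mem_D] at hp
    obtain ⟨⟨ha, hx, hb, hy, hs⟩, hxy⟩ := hp
    have hxy' : x = y := hxy
    subst hxy'
    have hax : 0 < a * x := Nat.mul_pos ha hx
    have hmul : (a + b) * x = n := by rw [Nat.add_mul]; exact hs
    have hn : n ≠ 0 := by omega
    simp only [Finset.mem_sigma, Nat.mem_divisors, mem_Ico]
    exact ⟨⟨⟨x, hmul.symm⟩, hn⟩, ha, by omega⟩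
  · rintro ⟨d, a⟩ hq
    simp only [Finset.mem_sigma, Nat.mem_divisors, mem_Ico] at hq
    obtain ⟨⟨hd, hn⟩, ha1, had⟩ := hq
    have hd0 : 0 < d := by omega
    have hx : 0 < n / d := Nat.div_pos (Nat.le_of_dvd (by omega) hd) hd0
    simp only [mem_filter, mem_D]
    refine ⟨⟨ha1, hx, by omega, hx, ?_⟩, by trivial⟩
    have h2 : a * (n / d) + (d - a) * (n / d) = d * (n / d) := by
      rw [← Nat.add_mul, Nat.add_sub_cancel' had.le]
    rw [h2, Nat.mul_div_cancel' hd]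
  · rintro ⟨⟨a,x⟩,b,y⟩ hp
    simp only [mem_filter, mem_D] at hp
    obtain ⟨⟨ha, hx, hb, hy, hs⟩, hxy⟩ := hp
    have hxy' : x = y := hxy
    subst hxy'
    have hmul : (a + b) * x = n := by rw [Nat.add_mul]; exact hs
    have hdiv : n / (a + b) = x := by
      rw [← hmul]; exact Nat.mul_div_cancel_left x (by omega)
    have h : a + b - a = b := by omega
    simp only [h, hdiv]
  · rintro ⟨d, a⟩ hq
    simp only [Finset.mem_sigma, Nat.mem_divisors, mem_Ico] at hq
    have h : a + (d - a) = d := by omega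
    simp only [h]
  · rintro ⟨⟨a,x⟩,b,y⟩ hp
    simp only [mem_filter, mem_D] at hp
    obtain ⟨⟨ha, hx, hb, hy, hs⟩, hxy⟩ := hp
    have hxy' : x = y := hxy
    subst hxy'
    have hmul : (a + b) * x = n := by rw [Nat.add_mul]; exact hs
    have hdiv : n / (a + b) = x := by
      rw [← hmul]; exact Nat.mul_div_cancel_left x (by omega)
    have h : a + b - a = b := by omega
    have h2 : ((a, n / (a + b)), (a + b - a, n / (a + b))) = ((a,x),(b,x)) := by
      rw [hdiv, h]
    exact (congrArg f h2).symm

/-- Reindexing of the boundary region a = b by (d, x) with d ∣ n, 1 ≤ x < n/d. -/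
lemma sum_E2 (n : ℕ) (f : ((ℕ × ℕ) × ℕ × ℕ) → ℤ) :
    ∑ p ∈ (D n).filter (fun p => p.1.1 = p.2.1), f p
      = ∑ d ∈ n.divisors, ∑ x ∈ Ico 1 (n / d), f ((d, x), (d, n / d - x)) := by
  rw [Finset.sum_sigma']
  apply Finset.sum_nbij' (fun p => (⟨p.1.1, p.1.2⟩ : Σ _ : ℕ, ℕ))
    (fun q => ((q.1, q.2), (q.1, n / q.1 - q.2)))
  · rintro ⟨⟨a,x⟩,b,y⟩ hp
    simp only [mem_filter, mem_D] at hp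
    obtain ⟨⟨ha, hx, hb, hy, hs⟩, hab⟩ := hp
    have hab' : a = b := hab
    subst hab'
    have hax : 0 < a * x := Nat.mul_pos ha hx
    have hmul : a * (x + y) = n := by rw [Nat.mul_add]; exact hs
    have hn : n ≠ 0 := by omega
    have hdiv : n / a = x + y := by
      rw [← hmul]; exact Nat.mul_div_cancel_left _ (by omega)
    simp only [Finset.mem_sigma, Nat.mem_divisors, mem_Ico]
    exact ⟨⟨⟨x + y, hmul.symm⟩, hn⟩, hx, by omega⟩
  · rintro ⟨d, x⟩ hq
    simp only [Finset.mem_sigma, Nat.mem_divisors, mem_Ico] at hq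
    obtain ⟨⟨hd, hn⟩, hx1, hxd⟩ := hq
    have hd0 : 0 < d := Nat.pos_of_dvd_of_pos hd (by omega)
    simp only [mem_filter, mem_D]
    refine ⟨⟨hd0, hx1, hd0, by omega, ?_⟩, by trivial⟩
    have h2 : d * x + d * (n / d - x) = d * (n / d) := by
      rw [← Nat.mul_add, Nat.add_sub_cancel' hxd.le]
    rw [h2, Nat.mul_div_cancel' hd]
  · rintro ⟨⟨a,x⟩,b,y⟩ hp
    simp only [mem_filter, mem_D] at hp
    obtain ⟨⟨ha, hx, hb, hy, hs⟩, hab⟩ := hp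
    have hab' : a = b := hab
    subst hab'
    have hmul : a * (x + y) = n := by rw [Nat.mul_add]; exact hs
    have hdiv : n / a = x + y := by
      rw [← hmul]; exact Nat.mul_div_cancel_left _ (by omega)
    have h : n / a - x = y := by omega
    simp only [h]
  · rintro ⟨d, x⟩ hq
    rfl
  · rintro ⟨⟨a,x⟩,b,y⟩ hp
    simp only [mem_filter, mem_D] at hp
    obtain ⟨⟨ha, hx, hb, hy, hs⟩, hab⟩ := hp
    have hab' : a = b := hab
    subst hab'
    have hmul : a * (x + y) = n := by rw [Nat.mul_add]; exact hs
    have hdiv : n / a = x + y := by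
      rw [← hmul]; exact Nat.mul_div_cancel_left _ (by omega)
    have h : n / a - x = y := by omega
    have h2 : ((a, x), (a, n / a - x)) = ((a,x),(a,y)) := by rw [h]
    exact (congrArg f h2).symm

lemma gauss1 (d : ℕ) : (2:ℤ) * ∑ a ∈ Ico 1 d, (a:ℤ) = d^2 - d := by
  induction d with
  | zero => simp
  | succ d ih =>
    rcases Nat.eq_zero_or_pos d with h | h
    · subst h; simp
    rw [Finset.sum_Ico_succ_top h]
    push_cast
    push_cast at ih
    ring_nf
    ring_nf at ih
    linarith

lemma gauss2 (d : ℕ) : (6:ℤ) * ∑ a ∈ Ico 1 d, (a:ℤ)^2 = 2*d^3 - 3*d^2 + d := by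
  induction d with
  | zero => simp
  | succ d ih =>
    rcases Nat.eq_zero_or_pos d with h | h
    · subst h; simp
    rw [Finset.sum_Ico_succ_top h]
    push_cast
    push_cast at ih
    ring_nf
    ring_nf at ih
    linarith


/-- weight a*b -/
def fab (p : (ℕ × ℕ) × ℕ × ℕ) : ℤ := (p.1.1 : ℤ) * p.2.1
def faa (p : (ℕ × ℕ) × ℕ × ℕ) : ℤ := (p.1.1 : ℤ) * p.1.1
def fbb (p : (ℕ × ℕ) × ℕ × ℕ) : ℤ := (p.2.1 : ℤ) * p.2.1

lemma sigma_cast (k n : ℕ) :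
    ((ArithmeticFunction.sigma k n : ℕ) : ℤ) = ∑ d ∈ n.divisors, (d:ℤ)^k := by
  rw [ArithmeticFunction.sigma_apply]
  push_cast
  rfl

lemma ev_E1_ab (n : ℕ) :
    (6:ℤ) * ∑ p ∈ (D n).filter (fun p => p.1.2 = p.2.2), fab p
      = (ArithmeticFunction.sigma 3 n : ℕ) - (ArithmeticFunction.sigma 1 n : ℕ) := by
  rw [sum_E1, Finset.mul_sum, sigma_cast, sigma_cast, ← Finset.sum_sub_distrib]
  apply sum_congr rfl
  intro d _
  have h1 : ∑ a ∈ Ico 1 d, fab ((a, n / d), (d - a, n / d))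
      = (d:ℤ) * (∑ a ∈ Ico 1 d, (a:ℤ)) - ∑ a ∈ Ico 1 d, (a:ℤ)^2 := by
    rw [Finset.mul_sum, ← Finset.sum_sub_distrib]
    apply sum_congr rfl
    intro a ha
    rw [mem_Ico] at ha
    show (a:ℤ) * ((d - a : ℕ) : ℤ) = _
    rw [Nat.cast_sub (by omega)]
    ring
  rw [h1]
  have h2 := gauss1 d
  have h3 := gauss2 d
  have h4 : (d:ℤ)^1 = (d:ℤ) := pow_one _
  rw [h4]
  linear_combination 3*(d:ℤ)*h2 - h3

lemma ev_E1_aa (n : ℕ) :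
    (6:ℤ) * ∑ p ∈ (D n).filter (fun p => p.1.2 = p.2.2), faa p
      = 2*(ArithmeticFunction.sigma 3 n : ℕ) - 3*(ArithmeticFunction.sigma 2 n : ℕ)
        + (ArithmeticFunction.sigma 1 n : ℕ) := by
  rw [sum_E1, Finset.mul_sum, sigma_cast, sigma_cast, sigma_cast,
    Finset.mul_sum, Finset.mul_sum, ← Finset.sum_sub_distrib, ← Finset.sum_add_distrib]
  apply sum_congr rfl
  intro d _
  have h1 : ∑ a ∈ Ico 1 d, faa ((a, n / d), (d - a, n / d)) = ∑ a ∈ Ico 1 d, (a:ℤ)^2 := by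
    apply sum_congr rfl
    intro a _
    show (a:ℤ) * a = _
    ring
  rw [h1]
  have h3 := gauss2 d
  have h4 : (d:ℤ)^1 = (d:ℤ) := pow_one _
  rw [h4]
  linear_combination h3

lemma ev_E2_aa (n : ℕ) :
    ∑ p ∈ (D n).filter (fun p => p.1.1 = p.2.1), faa p
      = n * (ArithmeticFunction.sigma 1 n : ℕ) - (ArithmeticFunction.sigma 2 n : ℕ) := by
  rw [sum_E2, sigma_cast, sigma_cast, Finset.mul_sum, ← Finset.sum_sub_distrib]
  apply sum_congr rfl
  intro d hd
  rw [Nat.mem_divisors] at hd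
  obtain ⟨hdvd, hn⟩ := hd
  have hd0 : 0 < d := Nat.pos_of_dvd_of_pos hdvd (Nat.pos_of_ne_zero hn)
  have hq1 : 1 ≤ n / d := Nat.one_le_div_iff hd0 |>.2 (Nat.le_of_dvd (Nat.pos_of_ne_zero hn) hdvd)
  have hinner : ∑ x ∈ Ico 1 (n / d), faa ((d, x), (d, n / d - x)) = ((n / d - 1 : ℕ) : ℤ) * ((d:ℤ)*d) := by
    have hc : ∑ x ∈ Ico 1 (n / d), faa ((d, x), (d, n / d - x))
        = ∑ _x ∈ Ico 1 (n / d), ((d:ℤ)*d) := Finset.sum_congr rfl (fun _ _ => rfl)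
    rw [hc, Finset.sum_const, Nat.card_Ico, nsmul_eq_mul]
  have hdn : (d:ℤ) * ((n / d : ℕ) : ℤ) = n := by
    exact_mod_cast congrArg (Nat.cast : ℕ → ℤ) (Nat.mul_div_cancel' hdvd)
  rw [hinner, Nat.cast_sub hq1, pow_one]
  linear_combination (d:ℤ) * hdn

lemma ev_E2_ab (n : ℕ) :
    ∑ p ∈ (D n).filter (fun p => p.1.1 = p.2.1), fab p
      = n * (ArithmeticFunction.sigma 1 n : ℕ) - (ArithmeticFunction.sigma 2 n : ℕ) := by
  rw [← ev_E2_aa, sum_E2, sum_E2]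
  apply sum_congr rfl
  intro d _
  apply sum_congr rfl
  intro x _
  rfl


/-- The master identity: 12 times the full weighted sum over D n. -/
theorem master (n : ℕ) :
    (12:ℤ) * ∑ p ∈ D n, fab p
      = 5 * (ArithmeticFunction.sigma 3 n : ℕ) + (ArithmeticFunction.sigma 1 n : ℕ)
        - 6 * n * (ArithmeticFunction.sigma 1 n : ℕ) := by
  have split_x_ab := sum_split (D n) (fun p => p.1.2) (fun p => p.2.2) fab
  have split_a_ab := sum_split (D n) (fun p => p.1.1) (fun p => p.2.1) fab
  have split_x_aa := sum_split (D n) (fun p => p.1.2) (fun p => p.2.2) faa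
  have split_a_aa := sum_split (D n) (fun p => p.1.1) (fun p => p.2.1) faa
  have swapQab : ∑ p ∈ (D n).filter (fun p => p.1.2 < p.2.2), fab p
      = ∑ p ∈ (D n).filter (fun p => p.2.2 < p.1.2), fab p := by
    rw [sum_swap_region n fab]
    exact sum_congr rfl (fun p _ => mul_comm _ _)
  have swapBab : ∑ p ∈ (D n).filter (fun p => p.2.1 < p.1.1), fab p
      = ∑ p ∈ (D n).filter (fun p => p.1.1 < p.2.1), fab p := by
    rw [sum_swap_region' n fab]
    exact sum_congr rfl (fun p _ => mul_comm _ _)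
  have swapQaa : ∑ p ∈ (D n).filter (fun p => p.1.2 < p.2.2), faa p
      = ∑ p ∈ (D n).filter (fun p => p.2.2 < p.1.2), fbb p :=
    sum_swap_region n faa
  have swapBaa : ∑ p ∈ (D n).filter (fun p => p.2.1 < p.1.1), faa p
      = ∑ p ∈ (D n).filter (fun p => p.1.1 < p.2.1), fbb p :=
    sum_swap_region' n faa
  have eucl_ab : ∑ p ∈ (D n).filter (fun p => p.1.1 < p.2.1), fab p
      = ∑ p ∈ (D n).filter (fun p => p.2.2 < p.1.2), faa p
        + ∑ p ∈ (D n).filter (fun p => p.2.2 < p.1.2), fab p := by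
    rw [sum_euclid n fab, ← Finset.sum_add_distrib]
    apply sum_congr rfl
    intro p _
    show (p.1.1 : ℤ) * ((p.1.1 + p.2.1 : ℕ) : ℤ) = _
    push_cast [fab, faa]
    ring
  have eucl_aa : ∑ p ∈ (D n).filter (fun p => p.1.1 < p.2.1), faa p
      = ∑ p ∈ (D n).filter (fun p => p.2.2 < p.1.2), faa p := by
    rw [sum_euclid n faa]
    exact sum_congr rfl (fun p _ => rfl)
  have eucl_bb : ∑ p ∈ (D n).filter (fun p => p.1.1 < p.2.1), fbb p
      = ∑ p ∈ (D n).filter (fun p => p.2.2 < p.1.2), faa p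
        + 2 * ∑ p ∈ (D n).filter (fun p => p.2.2 < p.1.2), fab p
        + ∑ p ∈ (D n).filter (fun p => p.2.2 < p.1.2), fbb p := by
    rw [sum_euclid n fbb, Finset.mul_sum, ← Finset.sum_add_distrib, ← Finset.sum_add_distrib]
    apply sum_congr rfl
    intro p _
    show ((p.1.1 + p.2.1 : ℕ) : ℤ) * ((p.1.1 + p.2.1 : ℕ) : ℤ) = _
    push_cast [fab, faa, fbb]
    ring
  have e1 := ev_E1_ab n
  have e2 := ev_E1_aa n
  have e3 := ev_E2_aa n
  have e4 := ev_E2_ab n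
  linarith


/-- The convolution sum as a sum over D. -/
lemma conv_eq (m : ℕ) :
    ∑ p ∈ antidiagonal m,
        ((ArithmeticFunction.sigma 1 (p.1 + 1) : ℕ) : ℤ)
          * ((ArithmeticFunction.sigma 1 (p.2 + 1) : ℕ) : ℤ)
      = ∑ p ∈ D (m + 2), fab p := by
  have step1 : ∀ p ∈ antidiagonal m,
      ((ArithmeticFunction.sigma 1 (p.1 + 1) : ℕ) : ℤ)
          * ((ArithmeticFunction.sigma 1 (p.2 + 1) : ℕ) : ℤ)
        = ∑ q ∈ (p.1 + 1).divisors ×ˢ (p.2 + 1).divisors, (q.1 : ℤ) * q.2 := by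
    intro p _
    rw [sigma_cast, sigma_cast, Finset.sum_mul_sum, Finset.sum_product]
    apply sum_congr rfl; intro a _; apply sum_congr rfl; intro b _
    rw [pow_one, pow_one]
  rw [Finset.sum_congr rfl step1, Finset.sum_sigma']
  apply Finset.sum_nbij'
    (fun q => (((q.2.1, (q.1.1 + 1) / q.2.1), (q.2.2, (q.1.2 + 1) / q.2.2)) : (ℕ × ℕ) × ℕ × ℕ))
    (fun p => (⟨(p.1.1 * p.1.2 - 1, p.2.1 * p.2.2 - 1), (p.1.1, p.2.1)⟩ :
      Σ _ : ℕ × ℕ, ℕ × ℕ))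
  · rintro ⟨⟨i, j⟩, a, b⟩ hq
    simp only [Finset.mem_sigma, Finset.HasAntidiagonal.mem_antidiagonal, Finset.mem_product,
      Nat.mem_divisors] at hq
    obtain ⟨hij, ⟨hai, -⟩, hbj, -⟩ := hq
    have ha0 : 0 < a := Nat.pos_of_dvd_of_pos hai (by omega)
    have hb0 : 0 < b := Nat.pos_of_dvd_of_pos hbj (by omega)
    have hia : a * ((i + 1) / a) = i + 1 := Nat.mul_div_cancel' hai
    have hjb : b * ((j + 1) / b) = j + 1 := Nat.mul_div_cancel' hbj
    rw [mem_D]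
    refine ⟨ha0, ?_, hb0, ?_, ?_⟩
    · exact Nat.div_pos (Nat.le_of_dvd (by omega) hai) ha0
    · exact Nat.div_pos (Nat.le_of_dvd (by omega) hbj) hb0
    · show a * ((i + 1) / a) + b * ((j + 1) / b) = m + 2
      omega
  · rintro ⟨⟨a, x⟩, b, y⟩ hp
    obtain ⟨ha, hx, hb, hy, hs0⟩ := mem_D.mp hp
    have hs : a * x + b * y = m + 2 := hs0
    have hax : 1 ≤ a * x := Nat.mul_pos ha hx
    have hby : 1 ≤ b * y := Nat.mul_pos hb hy
    simp only [Finset.mem_sigma, Finset.HasAntidiagonal.mem_antidiagonal, Finset.mem_product,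
      Nat.mem_divisors]
    obtain ⟨u, hu⟩ : ∃ u, a * x = u := ⟨_, rfl⟩
    obtain ⟨v, hv⟩ : ∃ v, b * y = v := ⟨_, rfl⟩
    rw [hu] at hs hax ⊢
    rw [hv] at hs hby ⊢
    refine ⟨by omega, ⟨⟨x, by omega⟩, by omega⟩, ⟨y, by omega⟩, by omega⟩
  · rintro ⟨⟨i, j⟩, a, b⟩ hq
    simp only [Finset.mem_sigma, Finset.HasAntidiagonal.mem_antidiagonal, Finset.mem_product,
      Nat.mem_divisors] at hq
    obtain ⟨hij, ⟨hai, -⟩, hbj, -⟩ := hq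
    have hia : a * ((i + 1) / a) = i + 1 := Nat.mul_div_cancel' hai
    have hjb : b * ((j + 1) / b) = j + 1 := Nat.mul_div_cancel' hbj
    have e1 : a * ((i + 1) / a) - 1 = i := by omega
    have e2 : b * ((j + 1) / b) - 1 = j := by omega
    simp only [e1, e2]
  · rintro ⟨⟨a, x⟩, b, y⟩ hp
    rw [mem_D] at hp
    obtain ⟨ha, hx, hb, hy, hs⟩ := hp
    have hax : 1 ≤ a * x := Nat.mul_pos ha hx
    have hby : 1 ≤ b * y := Nat.mul_pos hb hy
    have e1 : (a * x - 1 + 1) / a = x := by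
      rw [Nat.sub_add_cancel hax, Nat.mul_div_cancel_left x ha]
    have e2 : (b * y - 1 + 1) / b = y := by
      rw [Nat.sub_add_cancel hby, Nat.mul_div_cancel_left y hb]
    simp only [e1, e2]
  · rintro ⟨⟨i, j⟩, a, b⟩ _
    rfl

/-- Besge's convolution identity. -/
theorem besge (m : ℕ) :
    (12:ℤ) * ∑ p ∈ antidiagonal m,
        ((ArithmeticFunction.sigma 1 (p.1 + 1) : ℕ) : ℤ)
          * ((ArithmeticFunction.sigma 1 (p.2 + 1) : ℕ) : ℤ)
      = 5 * (ArithmeticFunction.sigma 3 (m + 2) : ℕ)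
        + (ArithmeticFunction.sigma 1 (m + 2) : ℕ)
        - 6 * (m + 2) * (ArithmeticFunction.sigma 1 (m + 2) : ℕ) := by
  rw [conv_eq m]
  have := master (m + 2)
  push_cast at this ⊢
  linarith


lemma sigma_le (k m : ℕ) : ArithmeticFunction.sigma k m ≤ m ^ (k + 1) := by
  rw [ArithmeticFunction.sigma_apply]
  calc ∑ d ∈ m.divisors, d ^ k ≤ ∑ _d ∈ m.divisors, m ^ k := by
        apply Finset.sum_le_sum
        intro d hd
        exact Nat.pow_le_pow_left (Nat.divisor_le hd) k
    _ = m.divisors.card * m ^ k := by rw [Finset.sum_const, smul_eq_mul]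
    _ ≤ m * m ^ k := by
        apply Nat.mul_le_mul_right
        calc m.divisors.card ≤ (Finset.Icc 1 m).card := by
              apply Finset.card_le_card
              intro d hd
              exact Finset.mem_Icc.2 ⟨Nat.pos_of_mem_divisors hd, Nat.divisor_le hd⟩
          _ = m := by rw [Nat.card_Icc]; omega
    _ = m ^ (k + 1) := by ring

lemma summable_aux {r : ℝ} (hr0 : 0 ≤ r) (hr : r < 1) (k : ℕ) :
    Summable (fun n : ℕ => ((n:ℝ) + 1) ^ k * r ^ (n + 1)) := by
  have h : Summable (fun n : ℕ => (n:ℝ) ^ k * r ^ n) :=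
    summable_pow_mul_geometric_of_norm_lt_one k
      (by rwa [Real.norm_eq_abs, _root_.abs_of_nonneg hr0])
  have h2 := h.comp_injective (add_left_injective 1)
  apply h2.congr
  intro n
  simp only [Function.comp_apply]
  push_cast
  ring

/-- Summability master lemma. -/
lemma main_sum {w : ℂ} (hw : ‖w‖ < 1) (k : ℕ) (a : ℕ → ℂ)
    (ha : ∀ n, ‖a n‖ ≤ ((n:ℝ) + 1) ^ k) :
    Summable (fun n : ℕ => ‖a n * w ^ (n + 1)‖) := by
  apply Summable.of_nonneg_of_le (fun n => norm_nonneg _) _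
    (summable_aux (norm_nonneg w) hw k)
  intro n
  rw [norm_mul, norm_pow]
  apply mul_le_mul_of_nonneg_right (ha n)
  positivity

lemma abs_sigma_le (k n : ℕ) :
    ‖((ArithmeticFunction.sigma k (n+1) : ℕ) : ℂ)‖ ≤ ((n:ℝ) + 1) ^ (k + 1) := by
  rw [Complex.norm_natCast]
  have h := sigma_le k (n + 1)
  calc ((ArithmeticFunction.sigma k (n+1) : ℕ) : ℝ) ≤ (((n+1) ^ (k+1) : ℕ) : ℝ) := by
        exact_mod_cast h
    _ = ((n:ℝ) + 1) ^ (k + 1) := by push_cast; ring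

/-- Termwise derivative of the E₂ series. -/
lemma hasDerivAt_E2sum (τ : ℂ) (hτ : 0 < τ.im) :
    HasDerivAt (fun z : ℂ => ∑' n : ℕ, (ArithmeticFunction.sigma 1 (n + 1) : ℂ) *
        Complex.exp (2 * (π : ℂ) * Complex.I * z) ^ (n + 1))
      (∑' n : ℕ, (2 * (π : ℂ) * Complex.I) * (((n:ℂ) + 1) *
        ((ArithmeticFunction.sigma 1 (n + 1) : ℂ) *
          Complex.exp (2 * (π : ℂ) * Complex.I * τ) ^ (n + 1)))) τ := by
  have hπ0 : (0:ℝ) < π := Real.pi_pos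
  set ρ : ℝ := Real.exp (-(π * τ.im)) with hρ
  have hρ0 : 0 < ρ := Real.exp_pos _
  have hρ1 : ρ < 1 := by
    rw [hρ, ← Real.exp_zero]
    apply Real.exp_lt_exp.2
    nlinarith
  have habs : ∀ z : ℂ, ‖Complex.exp (2*(π:ℂ)*Complex.I*z)‖
      = Real.exp (-(2*π*z.im)) := by
    intro z
    rw [Complex.norm_exp]
    congr 1
    simp [Complex.mul_re, Complex.mul_im]
  apply hasDerivAt_tsum_of_isPreconnected
    (g' := fun (n : ℕ) (z : ℂ) => (2 * (π : ℂ) * Complex.I) * (((n:ℂ) + 1) *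
      ((ArithmeticFunction.sigma 1 (n + 1) : ℂ) *
        Complex.exp (2 * (π : ℂ) * Complex.I * z) ^ (n + 1))))
    (u := fun n : ℕ => (2*π) * (((n:ℝ)+1)^3 * ρ^(n+1))) (y₀ := τ)
    (t := {z : ℂ | τ.im / 2 < z.im})
    (((summable_aux hρ0.le hρ1 3).mul_left (2*π)))
    (IsOpen.preimage Complex.continuous_im isOpen_Ioi)
    ((convex_halfSpace_im_gt (τ.im / 2)).isPreconnected)
  · -- HasDerivAt for each term
    intro n z _
    have h1 : HasDerivAt (fun z : ℂ => 2 * (π : ℂ) * Complex.I * z)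
        (2 * (π : ℂ) * Complex.I) z := by
      simpa using (hasDerivAt_id z).const_mul (2 * (π : ℂ) * Complex.I)
    have h2 := h1.cexp
    have h3 := h2.pow (n + 1)
    have h4 := h3.const_mul ((ArithmeticFunction.sigma 1 (n + 1) : ℕ) : ℂ)
    convert h4 using 1
    · rfl
    · rfl
    have hsub : n + 1 - 1 = n := rfl
    rw [hsub]
    push_cast
    ring
  · -- bound
    intro n z hz
    simp only [Set.mem_setOf_eq] at hz
    have e0 : ‖Complex.exp (2*(π:ℂ)*Complex.I*z)‖ ≤ ρ := by
      rw [habs z, hρ]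
      apply Real.exp_le_exp.2
      nlinarith
    have e1 : ‖Complex.exp (2*(π:ℂ)*Complex.I*z)‖ ^ (n+1) ≤ ρ^(n+1) :=
      pow_le_pow_left₀ (norm_nonneg _) e0 (n+1)
    have e2 : ‖((ArithmeticFunction.sigma 1 (n+1) : ℕ) : ℂ)‖ ≤ ((n:ℝ)+1)^2 :=
      abs_sigma_le 1 n
    rw [norm_mul]
    have e3 : ‖2*(π:ℂ)*Complex.I‖ = 2*π := by
      rw [norm_mul, norm_mul, Complex.norm_I, Complex.norm_two, Complex.norm_real,
        Real.norm_eq_abs, _root_.abs_of_pos hπ0]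
      ring
    rw [e3, norm_mul, norm_mul, norm_pow]
    have e4 : ‖(n:ℂ)+1‖ = (n:ℝ)+1 := by
      rw [show ((n:ℂ)+1) = ((n+1 : ℕ):ℂ) by push_cast; ring, Complex.norm_natCast]
      push_cast; ring
    rw [e4]
    have erhs : 2*π*(((n:ℝ)+1)^3 * ρ^(n+1))
        = 2*π*(((n:ℝ)+1)*((((n:ℝ)+1)^2) * ρ^(n+1))) := by ring
    rw [erhs]
    apply mul_le_mul_of_nonneg_left _ (by positivity : (0:ℝ) ≤ 2*π)
    apply mul_le_mul_of_nonneg_left _ (by positivity : (0:ℝ) ≤ (n:ℝ)+1)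
    exact mul_le_mul e2 e1 (by positivity) (by positivity)
  · simp only [Set.mem_setOf_eq]; linarith
  · -- summable at τ
    apply Summable.of_norm
    apply main_sum (w := Complex.exp (2*(π:ℂ)*Complex.I*τ)) _ 2
    · intro n; exact abs_sigma_le 1 n
    · rw [habs τ, ← Real.exp_zero]
      apply Real.exp_lt_exp.2
      nlinarith
  · simp only [Set.mem_setOf_eq]; linarith


end RamanujanAux

open RamanujanAux Finset

/-- Ramanujan's identity: (1/2πi) dE₂/dτ = (E₂² − E₄)/12. -/
theorem ramanujan_E2 (τ : ℂ) (hτ : 0 < τ.im) :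
    (1 / (2 * (π : ℂ) * Complex.I)) * deriv E2 τ = ((E2 τ) ^ 2 - E4 τ) / 12 := by
  have hπ0 : (0:ℝ) < π := Real.pi_pos
  set q : ℂ := Complex.exp (2 * (π : ℂ) * Complex.I * τ) with hq
  have hre : (2 * (π:ℂ) * Complex.I * τ).re = -(2 * π * τ.im) := by
    simp [Complex.mul_re, Complex.mul_im]
  have hq1 : ‖q‖ < 1 := by
    rw [hq, Complex.norm_exp, hre, ← Real.exp_zero]
    apply Real.exp_lt_exp.2
    nlinarith
  -- summability
  have sumA : Summable (fun n : ℕ =>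
      ‖(ArithmeticFunction.sigma 1 (n + 1) : ℂ) * q ^ (n + 1)‖) :=
    main_sum hq1 2 _ (abs_sigma_le 1)
  have sumB : Summable (fun n : ℕ =>
      ‖(ArithmeticFunction.sigma 3 (n + 1) : ℂ) * q ^ (n + 1)‖) :=
    main_sum hq1 4 _ (abs_sigma_le 3)
  have sumS : Summable (fun n : ℕ =>
      ‖(((n:ℂ) + 1) * (ArithmeticFunction.sigma 1 (n + 1) : ℂ)) * q ^ (n + 1)‖) := by
    apply main_sum hq1 3
    intro n
    rw [norm_mul]
    have e4 : ‖(n:ℂ)+1‖ = (n:ℝ)+1 := by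
      rw [show ((n:ℂ)+1) = ((n+1 : ℕ):ℂ) by push_cast; ring, Complex.norm_natCast]
      push_cast; ring
    rw [e4, show ((n:ℝ)+1)^3 = ((n:ℝ)+1) * ((n:ℝ)+1)^2 by ring]
    exact mul_le_mul_of_nonneg_left (abs_sigma_le 1 n) (by positivity)
  have hsA : Summable (fun n : ℕ =>
      (ArithmeticFunction.sigma 1 (n + 1) : ℂ) * q ^ (n + 1)) := sumA.of_norm
  have hsB : Summable (fun n : ℕ =>
      (ArithmeticFunction.sigma 3 (n + 1) : ℂ) * q ^ (n + 1)) := sumB.of_norm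
  have hsS : Summable (fun n : ℕ =>
      (((n:ℂ) + 1) * (ArithmeticFunction.sigma 1 (n + 1) : ℂ)) * q ^ (n + 1)) := sumS.of_norm
  set A : ℂ := ∑' n : ℕ, (ArithmeticFunction.sigma 1 (n + 1) : ℂ) * q ^ (n + 1) with hA
  set B : ℂ := ∑' n : ℕ, (ArithmeticFunction.sigma 3 (n + 1) : ℂ) * q ^ (n + 1) with hB
  set S : ℂ := ∑' n : ℕ,
    (((n:ℂ) + 1) * (ArithmeticFunction.sigma 1 (n + 1) : ℂ)) * q ^ (n + 1) with hS
  -- the derivative of E2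
  have hd0 := hasDerivAt_E2sum τ hτ
  have hsumval : (∑' n : ℕ, (2 * (π : ℂ) * Complex.I) * (((n:ℂ) + 1) *
      ((ArithmeticFunction.sigma 1 (n + 1) : ℂ) * q ^ (n + 1))))
        = (2 * (π : ℂ) * Complex.I) * S := by
    rw [tsum_mul_left, hS]
    congr 1
    apply tsum_congr
    intro n
    ring
  rw [← hq] at hd0
  rw [hsumval] at hd0
  have hderiv : HasDerivAt E2 (-(24 * ((2 * (π : ℂ) * Complex.I) * S))) τ := by
    have h2 := (hd0.const_mul (24:ℂ)).const_sub 1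
    exact h2
  have hE2deriv : deriv E2 τ = -(24 * ((2 * (π : ℂ) * Complex.I) * S)) := hderiv.deriv
  -- Cauchy product
  have hAA2 : A * A = ∑' m : ℕ, (∑ p ∈ antidiagonal m,
      (ArithmeticFunction.sigma 1 (p.1 + 1) : ℂ) * (ArithmeticFunction.sigma 1 (p.2 + 1) : ℂ))
        * q ^ (m + 2) := by
    rw [hA, tsum_mul_tsum_eq_tsum_sum_antidiagonal_of_summable_norm sumA sumA]
    apply tsum_congr
    intro m
    rw [Finset.sum_mul]
    apply Finset.sum_congr rfl
    intro p hp
    have hpm : p.1 + p.2 = m := Finset.HasAntidiagonal.mem_antidiagonal.mp hp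
    have hpow : q ^ (p.1 + 1) * q ^ (p.2 + 1) = q ^ (m + 2) := by
      rw [← pow_add]
      congr 1
      omega
    calc (ArithmeticFunction.sigma 1 (p.1 + 1) : ℂ) * q ^ (p.1 + 1) *
          ((ArithmeticFunction.sigma 1 (p.2 + 1) : ℂ) * q ^ (p.2 + 1))
        = (ArithmeticFunction.sigma 1 (p.1 + 1) : ℂ) * (ArithmeticFunction.sigma 1 (p.2 + 1) : ℂ)
            * (q ^ (p.1 + 1) * q ^ (p.2 + 1)) := by ring
      _ = _ := by rw [hpow]
  -- the key series identity
  set w : ℕ → ℂ := fun n => (48 * (ArithmeticFunction.sigma 1 (n + 1) : ℂ)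
      + 240 * (ArithmeticFunction.sigma 3 (n + 1) : ℂ)
      - 288 * ((n:ℂ) + 1) * (ArithmeticFunction.sigma 1 (n + 1) : ℂ)) * q ^ (n + 1) with hw
  have hwe : ∀ n, w n = 48 * ((ArithmeticFunction.sigma 1 (n + 1) : ℂ) * q ^ (n + 1))
      + 240 * ((ArithmeticFunction.sigma 3 (n + 1) : ℂ) * q ^ (n + 1))
      - 288 * ((((n:ℂ) + 1) * (ArithmeticFunction.sigma 1 (n + 1) : ℂ)) * q ^ (n + 1)) := by
    intro n
    rw [hw]
    ring
  have hsW : Summable w :=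
    ((((hsA.mul_left 48).add (hsB.mul_left 240)).sub (hsS.mul_left 288)).congr
      (fun n => (hwe n).symm))
  have hW1 : ∑' n, w n = 48 * A + 240 * B - 288 * S := by
    calc ∑' n, w n = ∑' n, (48 * ((ArithmeticFunction.sigma 1 (n + 1) : ℂ) * q ^ (n + 1))
        + 240 * ((ArithmeticFunction.sigma 3 (n + 1) : ℂ) * q ^ (n + 1))
        - 288 * ((((n:ℂ) + 1) * (ArithmeticFunction.sigma 1 (n + 1) : ℂ)) * q ^ (n + 1))) :=
          tsum_congr hwe
      _ = 48 * A + 240 * B - 288 * S := by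
          rw [Summable.tsum_sub ((hsA.mul_left 48).add (hsB.mul_left 240)) (hsS.mul_left 288),
            Summable.tsum_add (hsA.mul_left 48) (hsB.mul_left 240),
            tsum_mul_left, tsum_mul_left, tsum_mul_left, ← hA, ← hB, ← hS]
  have hW2 : ∑' n, w n = 576 * (A * A) := by
    rw [Summable.tsum_eq_zero_add hsW]
    have hw0 : w 0 = 0 := by
      have h1 : ((ArithmeticFunction.sigma 1 (0 + 1) : ℕ) : ℂ) = 1 := by
        norm_num [ArithmeticFunction.sigma_apply]
      have h3 : ((ArithmeticFunction.sigma 3 (0 + 1) : ℕ) : ℂ) = 1 := by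
        norm_num [ArithmeticFunction.sigma_apply]
      simp only [hw]
      rw [h1, h3]
      push_cast
      ring
    rw [hw0, zero_add, hAA2, ← tsum_mul_left]
    apply tsum_congr
    intro m
    have hb := besge m
    have hbC : (12:ℂ) * ∑ p ∈ antidiagonal m,
        (ArithmeticFunction.sigma 1 (p.1 + 1) : ℂ) * (ArithmeticFunction.sigma 1 (p.2 + 1) : ℂ)
        = 5 * (ArithmeticFunction.sigma 3 (m + 2) : ℂ)
          + (ArithmeticFunction.sigma 1 (m + 2) : ℂ)
          - 6 * ((m:ℂ) + 2) * (ArithmeticFunction.sigma 1 (m + 2) : ℂ) := by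
      have := congrArg (fun z : ℤ => (z : ℂ)) hb
      push_cast at this
      convert this using 2 <;> push_cast <;> ring
    rw [hw]
    push_cast
    linear_combination (-48 * q ^ (m + 2)) * hbC
  have key : 48 * A + 240 * B - 288 * S = 576 * (A * A) := by
    rw [← hW1]
    exact hW2
  -- final algebra
  have h2πI : (2 * (π:ℂ) * Complex.I) ≠ 0 := by
    apply mul_ne_zero
    apply mul_ne_zero
    · norm_num
    · exact_mod_cast Real.pi_ne_zero
    · exact Complex.I_ne_zero
  have hE2v : E2 τ = 1 - 24 * A := by rw [E2, hA, hq]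
  have hE4v : E4 τ = 1 + 240 * B := by rw [E4, hB, hq]
  rw [hE2deriv, hE2v, hE4v]
  have lhs_eq : (1 / (2 * (π:ℂ) * Complex.I)) * (-(24 * ((2 * (π:ℂ) * Complex.I) * S)))
      = -24 * S := by
    field_simp
  rw [lhs_eq, eq_div_iff (by norm_num : (12:ℂ) ≠ 0)]
  linear_combination key
end

section
/- The limit of ℘ as τ → i∞: for z ∉ ℤ fixed, lim_{Im(τ)→∞, |Re(τ)|≤1/2} ℘(τ; z) = π²/sin²(πz) − π²/3. -/
open Complex Real

namespace WpLim

open Filter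

lemma summable_int_inv_sq : Summable (fun n : ℤ => 1 / (n:ℝ)^2) :=
  (Real.summable_one_div_int_pow).mpr one_lt_two

lemma summable_of_sq_bound {E : Type*} [NormedAddCommGroup E] [CompleteSpace E]
    (u : ℤ → E) (C : ℝ)
    (h : ∀ n : ℤ, 2 ≤ n.natAbs → ‖u n‖ ≤ C / (n:ℝ)^2) : Summable u := by
  apply Summable.of_norm_bounded_eventually (g := fun n : ℤ => C / (n:ℝ)^2)
  · simpa only [mul_one_div] using summable_int_inv_sq.mul_left C
  · apply Set.Finite.subset (Set.finite_Icc (-1 : ℤ) 1)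
    intro n hn
    simp only [Set.mem_compl_iff, Set.mem_setOf_eq, not_le] at hn
    simp only [Set.mem_Icc]
    by_contra hc
    exact absurd (h n (by omega)) (not_le.mpr hn)

lemma norm_one_div_sq (w : ℂ) : ‖1 / w^2‖ = 1 / ‖w‖^2 := by simp

lemma one_div_sq_le {w : ℂ} {m : ℝ} (hm : 0 < m) (h : m ≤ ‖w‖) :
    ‖1 / w^2‖ ≤ 1 / m^2 := by
  rw [norm_one_div_sq]
  gcongr

lemma norm_int_cast (n : ℤ) : ‖(n:ℂ)‖ = |(n:ℝ)| := by
  rw [show ((n:ℂ)) = ((n:ℝ):ℂ) by push_cast; ring, Complex.norm_real, Real.norm_eq_abs]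

lemma norm_sub_int_lower (z : ℂ) (n : ℤ) : |(n:ℝ)| - ‖z‖ ≤ ‖z - n‖ := by
  have h3 := norm_sub_norm_le ((n:ℂ)) z
  rw [norm_sub_rev, norm_int_cast] at h3
  linarith [h3]

lemma summable_row (z : ℂ) : Summable (fun n : ℤ => 1 / (z - n)^2) := by
  obtain ⟨k, hk⟩ := exists_nat_ge ‖z‖
  apply Summable.of_norm_bounded_eventually (g := fun n : ℤ => 4 / (n:ℝ)^2)
  · simpa only [mul_one_div] using summable_int_inv_sq.mul_left (4:ℝ)
  · apply Set.Finite.subset (Set.finite_Icc (-(2*(k:ℤ)+2)) (2*(k:ℤ)+2))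
    intro n hn
    simp only [Set.mem_compl_iff, Set.mem_setOf_eq, not_le] at hn
    simp only [Set.mem_Icc]
    by_contra hc
    apply absurd hn
    push_neg
    have hz0 := norm_nonneg z
    have h1 : 2 * ‖z‖ + 2 ≤ |(n:ℝ)| := by
      have h0 : ((2*(k:ℤ)+2 : ℤ) : ℝ) ≤ |(n:ℝ)| := by
        rw [← Int.cast_abs]
        exact_mod_cast (by rw [Int.abs_eq_natAbs]; omega : (2*(k:ℤ)+2) ≤ |n|)
      push_cast at h0
      nlinarith
    have h2 : |(n:ℝ)| / 2 ≤ ‖z - n‖ := by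
      have := norm_sub_int_lower z n
      nlinarith
    calc ‖1 / (z - n)^2‖ ≤ 1 / (|(n:ℝ)|/2)^2 := one_div_sq_le (by nlinarith) h2
      _ = 4 / (n:ℝ)^2 := by rw [div_pow, ← _root_.sq_abs (n:ℝ)]; ring

noncomputable def S (z : ℂ) : ℂ := ∑' n : ℤ, 1 / (z - n)^2

lemma norm_S_le (z : ℂ) (u : ℤ → ℝ) (hu : Summable u)
    (h : ∀ n : ℤ, ‖1 / (z - n)^2‖ ≤ u n) : ‖S z‖ ≤ ∑' n, u n := by
  have hs : Summable fun n : ℤ => ‖1 / (z - (n:ℂ))^2‖ :=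
    hu.of_nonneg_of_le (fun n => norm_nonneg _) h
  exact (norm_tsum_le_tsum_norm hs).trans (Summable.tsum_le_tsum h hs hu)


/-- `S` is 1-periodic. -/
lemma S_add_one (z : ℂ) : S (z + 1) = S z := by
  unfold S
  rw [← (Equiv.subRight (1:ℤ)).tsum_eq (fun n : ℤ => 1 / (z - n)^2)]
  apply tsum_congr
  intro n
  simp only [Equiv.subRight_apply]
  push_cast
  ring_nf

lemma S_add_int (z : ℂ) (k : ℤ) : S (z + k) = S z := by
  induction k using Int.induction_on with
  | zero => simp
  | succ n ih =>
      push_cast at ih ⊢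
      rw [show z + ((n:ℂ) + 1) = (z + (n:ℂ)) + 1 by ring, S_add_one]
      exact ih
  | pred n ih =>
      push_cast at ih ⊢
      have h2 := S_add_one (z + (-(n:ℂ) - 1))
      rw [show z + (-(n:ℂ) - 1) + 1 = z + -(n:ℂ) by ring] at h2
      rw [← h2]
      exact ih

lemma hinj_two_mul : Function.Injective (fun n : ℤ => 2*n) := fun a b h => by
  have : 2*a = 2*b := h
  omega

lemma hinj_two_mul_add_one : Function.Injective (fun n : ℤ => 2*n+1) := fun a b h => by
  have : 2*a+1 = 2*b+1 := h
  omega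

lemma hasSum_int_even_odd {f : ℤ → ℂ} {a b : ℂ}
    (h1 : HasSum (fun n : ℤ => f (2*n)) a) (h2 : HasSum (fun n : ℤ => f (2*n+1)) b) :
    HasSum f (a + b) := by
  have hc : IsCompl (Set.range fun n : ℤ => 2*n) (Set.range fun n : ℤ => 2*n+1) := by
    constructor
    · rw [Set.disjoint_left]
      rintro _ ⟨m, rfl⟩ ⟨k, hk⟩
      have : 2*k+1 = 2*m := hk
      omega
    · rw [codisjoint_iff_le_sup]
      intro k _
      rcases Int.even_or_odd k with ⟨m, hm⟩ | ⟨m, hm⟩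
      · exact Set.mem_union_left _ ⟨m, show 2*m = k by omega⟩
      · exact Set.mem_union_right _ ⟨m, show 2*m+1 = k by omega⟩
  exact HasSum.add_isCompl hc (hinj_two_mul.hasSum_range_iff.mpr h1)
    (hinj_two_mul_add_one.hasSum_range_iff.mpr h2)

lemma one_div_half_sq (w : ℂ) : 1 / (w/2)^2 = 4 / w^2 := by
  rcases eq_or_ne w 0 with rfl | hw
  · simp
  · field_simp
    ring

/-- duplication formula for S -/
lemma S_duplication (z : ℂ) : S (z/2) + S ((z+1)/2) = 4 * S z := by
  have hf := summable_row z
  set f : ℤ → ℂ := fun n : ℤ => 1 / (z - n)^2 with hfdef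
  have hfe : Summable (fun n : ℤ => f (2*n)) := hf.comp_injective hinj_two_mul
  have hfo : Summable (fun n : ℤ => f (2*n+1)) := hf.comp_injective hinj_two_mul_add_one
  have hS := (hasSum_int_even_odd hfe.hasSum hfo.hasSum).tsum_eq
  have hE : S (z/2) = 4 * ∑' n : ℤ, f (2*n) := by
    unfold S
    rw [← tsum_mul_left]
    apply tsum_congr
    intro n
    have h1 : z/2 - (n:ℂ) = (z - 2*n)/2 := by ring
    rw [h1, one_div_half_sq, hfdef]
    push_cast
    ring_nf
  have hO : S ((z+1)/2) = 4 * ∑' n : ℤ, f (2*n+1) := by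
    unfold S
    rw [← tsum_mul_left]
    have step1 : ∑' (n : ℤ), 1 / ((z+1)/2 - (n:ℂ))^2 = ∑' n : ℤ, 4 * f (2*n - 1) := by
      apply tsum_congr
      intro n
      have h1 : (z+1)/2 - (n:ℂ) = (z - (2*(n:ℂ) - 1))/2 := by ring
      rw [h1, one_div_half_sq, hfdef]
      push_cast
      ring_nf
    rw [step1, ← (Equiv.addRight (1:ℤ)).tsum_eq (fun n : ℤ => 4 * f (2*n - 1))]
    apply tsum_congr
    intro n
    simp only [Equiv.coe_addRight]
    have h2 : 2*(n+1) - 1 = 2*n+1 := by ring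
    rw [h2]
  rw [hE, hO, show S z = ∑' n : ℤ, f n from rfl, hS]
  ring


/-- the limit candidate function -/
noncomputable def g (z : ℂ) : ℂ := (π:ℂ)^2 / Complex.sin ((π:ℂ) * z) ^ 2

lemma pi_ne_zero_c : ((π:ℂ)) ≠ 0 := Complex.ofReal_ne_zero.mpr Real.pi_ne_zero

lemma notInt_iff {z : ℂ} : (∀ n : ℤ, z ≠ (n : ℂ)) ↔ Complex.sin ((π:ℂ) * z) ≠ 0 := by
  constructor
  · intro h hs
    obtain ⟨k, hk⟩ := Complex.sin_eq_zero_iff.mp hs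
    have h2 : (π:ℂ) * z = (π:ℂ) * (k:ℂ) := by linear_combination hk
    exact h k (mul_left_cancel₀ pi_ne_zero_c h2)
  · intro h n hn
    apply h
    rw [hn, Complex.sin_eq_zero_iff]
    exact ⟨n, by ring⟩

lemma sin_pi_half_ne_zero {z : ℂ} (hz : ∀ n : ℤ, z ≠ (n : ℂ)) :
    Complex.sin ((π:ℂ) * (z/2)) ≠ 0 := by
  apply notInt_iff.mp
  intro n hn
  rw [div_eq_iff (two_ne_zero : (2:ℂ) ≠ 0)] at hn
  exact hz (2*n) (by rw [hn]; push_cast; ring)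

lemma cos_pi_half_ne_zero {z : ℂ} (hz : ∀ n : ℤ, z ≠ (n : ℂ)) :
    Complex.cos ((π:ℂ) * (z/2)) ≠ 0 := by
  intro hc
  obtain ⟨k, hk⟩ := Complex.cos_eq_zero_iff.mp hc
  have h2 : (π:ℂ) * z = (π:ℂ) * ((2*k+1 : ℤ):ℂ) := by push_cast; linear_combination 2 * hk
  exact hz (2*k+1) (mul_left_cancel₀ pi_ne_zero_c h2)

/-- duplication for g -/
lemma g_duplication {z : ℂ} (hz : ∀ n : ℤ, z ≠ (n : ℂ)) :
    g (z/2) + g ((z+1)/2) = 4 * g z := by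
  have hs := sin_pi_half_ne_zero hz
  have hc := cos_pi_half_ne_zero hz
  have hdup : Complex.sin ((π:ℂ) * z) =
      2 * Complex.sin ((π:ℂ) * (z/2)) * Complex.cos ((π:ℂ) * (z/2)) := by
    rw [show (π:ℂ) * z = 2 * ((π:ℂ) * (z/2)) by ring, Complex.sin_two_mul]
  have hshift : Complex.sin ((π:ℂ) * ((z+1)/2)) = Complex.cos ((π:ℂ) * (z/2)) := by
    rw [show (π:ℂ) * ((z+1)/2) = (π:ℂ) * (z/2) + (π:ℂ)/2 by ring,
      Complex.sin_add_pi_div_two]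
  unfold g
  rw [hdup, hshift]
  set s := Complex.sin ((π:ℂ) * (z/2)) with hsdef
  set c := Complex.cos ((π:ℂ) * (z/2)) with hcdef
  have key : s^2 + c^2 = 1 := Complex.sin_sq_add_cos_sq _
  have hs2 : s^2 ≠ 0 := pow_ne_zero _ hs
  have hc2 : c^2 ≠ 0 := pow_ne_zero _ hc
  have h22 : ((2:ℂ)*s*c)^2 = 4 * (s^2 * c^2) := by ring
  rw [h22]
  rw [div_add_div _ _ hs2 hc2,
    show (4:ℂ) * ((π:ℂ)^2 / (4*(s^2*c^2))) = ((4:ℂ)*(π:ℂ)^2) / (4*(s^2*c^2)) by ring,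
    div_eq_div_iff (mul_ne_zero hs2 hc2)
      (by simp [hs2, hc2] : (4:ℂ) * (s^2 * c^2) ≠ 0)]
  linear_combination (4 * (π:ℂ)^2 * s^2 * c^2) * key

lemma g_add_one (z : ℂ) : g (z + 1) = g z := by
  unfold g
  congr 1
  have hsp : Complex.sin ((π:ℝ):ℂ) = 0 := by
    rw [← Complex.ofReal_sin, Real.sin_pi, Complex.ofReal_zero]
  have hcp : Complex.cos ((π:ℝ):ℂ) = -1 := by
    rw [← Complex.ofReal_cos, Real.cos_pi]
    simp
  rw [show (π:ℂ) * (z+1) = (π:ℂ) * z + π by ring, Complex.sin_add, hsp, hcp]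
  ring

lemma g_add_int (z : ℂ) (k : ℤ) : g (z + k) = g z := by
  induction k using Int.induction_on with
  | zero => simp
  | succ n ih =>
      push_cast at ih ⊢
      rw [show z + ((n:ℂ) + 1) = (z + (n:ℂ)) + 1 by ring, g_add_one]
      exact ih
  | pred n ih =>
      push_cast at ih ⊢
      have h2 := g_add_one (z + (-(n:ℂ) - 1))
      rw [show z + (-(n:ℂ) - 1) + 1 = z + -(n:ℂ) by ring] at h2
      rw [← h2]
      exact ih

/-- cubic bound for sin near 0 -/
lemma sin_sub_self_bound {w : ℂ} (hw : ‖w‖ ≤ 1) : ‖Complex.sin w - w‖ ≤ ‖w‖^3 := by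
  have hwI : ‖w * Complex.I‖ ≤ 1 := by
    rwa [norm_mul, Complex.norm_I, mul_one]
  have hwI' : ‖-w * Complex.I‖ ≤ 1 := by
    rwa [norm_mul, norm_neg, Complex.norm_I, mul_one]
  have h1 := Complex.exp_bound hwI (by norm_num : 0 < 3)
  have h2 := Complex.exp_bound hwI' (by norm_num : 0 < 3)
  have hconst : ((Nat.succ 3 : ℕ) : ℝ) * (((Nat.factorial 3 : ℕ) : ℝ) * ((3:ℕ):ℝ))⁻¹
      = 2/9 := by
    norm_num [Nat.factorial]
  rw [hconst] at h1 h2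
  have habs1 : ‖w * Complex.I‖ = ‖w‖ := by
    rw [norm_mul, Complex.norm_I, mul_one]
  have habs2 : ‖-w * Complex.I‖ = ‖w‖ := by
    rw [norm_mul, norm_neg, Complex.norm_I, mul_one]
  rw [habs1] at h1
  rw [habs2] at h2
  set E1 := Complex.exp (w * Complex.I)
    - ∑ m ∈ Finset.range 3, (w * Complex.I) ^ m / (m.factorial : ℂ) with hE1
  set E2 := Complex.exp (-w * Complex.I)
    - ∑ m ∈ Finset.range 3, (-w * Complex.I) ^ m / (m.factorial : ℂ) with hE2
  have key : Complex.sin w - w = (E2 - E1) * Complex.I / 2 := by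
    rw [Complex.sin, hE1, hE2]
    simp only [Finset.sum_range_succ, Finset.sum_range_zero, Nat.factorial]
    push_cast
    linear_combination (-w) * Complex.I_sq
  rw [key]
  have hn : ‖(E2 - E1) * Complex.I / 2‖ = ‖E2 - E1‖/2 := by
    rw [norm_div, norm_mul, Complex.norm_I, mul_one]
    norm_num
  rw [hn]
  have hE1n : ‖E1‖ ≤ ‖w‖^3 * (2/9) := h1
  have hE2n : ‖E2‖ ≤ ‖w‖^3 * (2/9) := h2
  have h3 := norm_sub_le E2 E1
  have h4 : (0:ℝ) ≤ ‖w‖^3 := pow_nonneg (norm_nonneg w) 3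
  linarith

/-- lower bound for |sin| in terms of |Im| -/
lemma sin_lower_bound (w : ℂ) :
    (Real.exp |w.im| - Real.exp (-|w.im|)) / 2 ≤ ‖Complex.sin w‖ := by
  have hsin : Complex.sin w = (Complex.exp (-w * Complex.I) -
      Complex.exp (w * Complex.I)) * Complex.I / 2 := by
    rw [Complex.sin]
  rw [hsin]
  have hnorm : ‖(Complex.exp (-w * Complex.I) - Complex.exp (w * Complex.I)) * Complex.I / 2‖
      = ‖Complex.exp (-w * Complex.I) - Complex.exp (w * Complex.I)‖ / 2 := by
    rw [norm_div, norm_mul, Complex.norm_I, mul_one]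
    norm_num
  rw [hnorm]
  have h1 : ‖Complex.exp (-w * Complex.I)‖ = Real.exp w.im := by
    rw [Complex.norm_exp]
    congr 1
    simp [Complex.mul_re]
  have h2 : ‖Complex.exp (w * Complex.I)‖ = Real.exp (-w.im) := by
    rw [Complex.norm_exp]
    congr 1
    simp [Complex.mul_re]
  rcases le_total 0 w.im with him | him
  · rw [_root_.abs_of_nonneg him]
    have h3 := norm_sub_norm_le (Complex.exp (-w * Complex.I)) (Complex.exp (w * Complex.I))
    rw [h1, h2] at h3
    linarith
  · rw [abs_of_nonpos him, neg_neg]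
    have h3 := norm_sub_norm_le (Complex.exp (w * Complex.I)) (Complex.exp (-w * Complex.I))
    rw [norm_sub_rev, h1, h2] at h3
    linarith


lemma re_sub_int_le (z : ℂ) (n : ℤ) : |z.re - (n:ℝ)| ≤ ‖z - n‖ := by
  have h := Complex.abs_re_le_norm (z - n)
  have h2 : (z - (n:ℂ)).re = z.re - (n:ℝ) := by simp
  rwa [h2] at h

lemma norm_tsum_le_of_le {f : ℤ → ℂ} (u : ℤ → ℝ) (hu : Summable u)
    (h : ∀ n : ℤ, ‖f n‖ ≤ u n) : ‖∑' n : ℤ, f n‖ ≤ ∑' n : ℤ, u n := by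
  have hs : Summable fun n : ℤ => ‖f n‖ :=
    hu.of_nonneg_of_le (fun n => norm_nonneg _) h
  exact (norm_tsum_le_tsum_norm hs).trans (Summable.tsum_le_tsum h hs hu)

/-- B1: bound for S on the fundamental region away from 0, 1 -/
lemma S_bound_region : ∃ C : ℝ, ∀ z : ℂ, 0 ≤ z.re → z.re ≤ 1 →
    (1/4:ℝ) ≤ ‖z‖ → (1/4:ℝ) ≤ ‖z - 1‖ → ‖S z‖ ≤ C := by
  set u : ℤ → ℝ := fun n => 16 / (max 1 (|(n:ℝ)| - 1))^2 with hu
  have hmax_pos : ∀ n : ℤ, (0:ℝ) < max 1 (|(n:ℝ)| - 1) := fun n =>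
    lt_of_lt_of_le one_pos (le_max_left _ _)
  have husum : Summable u := by
    apply summable_of_sq_bound u 64
    intro n hn
    have h2 : (2:ℝ) ≤ |(n:ℝ)| := by
      rw [← Int.cast_abs]
      exact_mod_cast (by rw [Int.abs_eq_natAbs]; omega : (2:ℤ) ≤ |n|)
    have h3 : max 1 (|(n:ℝ)| - 1) = |(n:ℝ)| - 1 := max_eq_right (by linarith)
    have h4 : |(n:ℝ)|/2 ≤ |(n:ℝ)| - 1 := by linarith
    have h5 : (0:ℝ) < |(n:ℝ)|/2 := by linarith
    rw [Real.norm_eq_abs, hu]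
    simp only
    rw [h3, _root_.abs_of_nonneg (by positivity)]
    rw [div_le_div_iff₀ (by nlinarith) (by nlinarith [_root_.sq_abs (n:ℝ), abs_nonneg (n:ℝ)])]
    have : (n:ℝ)^2 = |(n:ℝ)|^2 := (_root_.sq_abs _).symm
    nlinarith [sq_nonneg (|(n:ℝ)| - 2)]
  refine ⟨∑' n, u n, fun z h0 h1 hz0 hz1 => ?_⟩
  apply norm_tsum_le_of_le u husum
  intro n
  have key : max 1 (|(n:ℝ)| - 1) / 4 ≤ ‖z - n‖ := by
    by_cases hn0 : n = 0
    · subst hn0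
      simp only [Int.cast_zero, abs_zero, sub_self]
      rw [show ((0:ℝ) - 1) = -1 by ring, max_eq_left (by norm_num)]
      simpa using hz0
    by_cases hn1 : n = 1
    · subst hn1
      simp only [Int.cast_one, abs_one, sub_self]
      rw [max_eq_left (by norm_num)]
      simpa using hz1
    -- n ≤ -1 or n ≥ 2
    have hcase : n ≤ -1 ∨ 2 ≤ n := by omega
    have hre : max 1 (|(n:ℝ)| - 1) ≤ |z.re - (n:ℝ)| := by
      rcases hcase with hc | hc
      · have hc' : (n:ℝ) ≤ -1 := by exact_mod_cast hc
        have habs : |(n:ℝ)| = -(n:ℝ) := abs_of_nonpos (by linarith)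
        rw [habs, _root_.abs_of_nonneg (by linarith), max_le_iff]
        constructor <;> linarith
      · have hc' : (2:ℝ) ≤ (n:ℝ) := by exact_mod_cast hc
        have habs : |(n:ℝ)| = (n:ℝ) := abs_of_nonneg (by linarith)
        rw [habs, _root_.abs_of_nonpos (by linarith), max_le_iff]
        constructor <;> linarith
    have := re_sub_int_le z n
    have hquarter : max 1 (|(n:ℝ)| - 1) / 4 ≤ max 1 (|(n:ℝ)| - 1) := by
      have := hmax_pos n
      linarith
    linarith
  calc ‖1 / (z - n)^2‖ ≤ 1 / (max 1 (|(n:ℝ)| - 1) / 4)^2 :=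
        one_div_sq_le (by positivity) key
    _ = u n := by
        rw [hu]
        simp only
        rw [div_pow]
        rw [one_div_div]
        ring

/-- B2: bound for the n ≠ 0 part of S near zero -/
lemma S_near_zero_bound : ∃ C : ℝ, ∀ z : ℂ, ‖z‖ ≤ 1/4 →
    ‖∑' n : ℤ, (if n = 0 then 0 else 1 / (z - n)^2)‖ ≤ C := by
  set u : ℤ → ℝ := fun n => if n = 0 then 0 else 2 / (n:ℝ)^2 with hu
  have husum : Summable u := by
    apply summable_of_sq_bound u 2
    intro n hn
    have hn0 : n ≠ 0 := by omega
    rw [hu]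
    simp only [hn0, if_false, Real.norm_eq_abs]
    rw [_root_.abs_of_nonneg (by positivity)]
  refine ⟨∑' n, u n, fun z hz => ?_⟩
  apply norm_tsum_le_of_le u husum
  intro n
  by_cases hn0 : n = 0
  · subst hn0; simp [hu]
  · simp only [hu, hn0, if_false]
    have h1 : (1:ℝ) ≤ |(n:ℝ)| := by
      rw [← Int.cast_abs]
      exact_mod_cast (by rw [Int.abs_eq_natAbs]; omega : (1:ℤ) ≤ |n|)
    have h2 : (3/4:ℝ) * |(n:ℝ)| ≤ ‖z - n‖ := by
      have := norm_sub_int_lower z n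
      linarith
    calc ‖1 / (z - n)^2‖ ≤ 1 / ((3/4:ℝ) * |(n:ℝ)|)^2 :=
          one_div_sq_le (by positivity) h2
      _ ≤ 2 / (n:ℝ)^2 := by
          rw [div_le_div_iff₀ (by positivity) (by positivity : (0:ℝ) < (n:ℝ)^2)]
          have : (n:ℝ)^2 = |(n:ℝ)|^2 := (_root_.sq_abs _).symm
          nlinarith
  
/-- splitting S at n = 0 -/
lemma S_split (z : ℂ) : S z = 1/z^2 + ∑' n : ℤ, (if n = 0 then 0 else 1 / (z - n)^2) := by
  have h := Summable.tsum_eq_add_tsum_ite (summable_row z) 0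
  unfold S
  rw [h]
  norm_num

/-- B3: bound for g - 1/z² near 0 -/
lemma g_near_zero_bound {z : ℂ} (hz0 : z ≠ 0) (hz : ‖z‖ ≤ 1/4) :
    ‖g z - 1/z^2‖ ≤ 27 * π^2 := by
  set w : ℂ := (π:ℂ) * z with hw
  have hnw : ‖w‖ = π * ‖z‖ := by
    rw [hw, norm_mul, Complex.norm_real, Real.norm_eq_abs, abs_of_pos Real.pi_pos]
  have hpi4 : π ≤ 4 := by linarith [Real.pi_lt_d2]
  have hw1 : ‖w‖ ≤ 1 := by
    rw [hnw]
    nlinarith [Real.pi_pos]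
  have hcb := sin_sub_self_bound hw1
  have hwpos : (0:ℝ) < ‖w‖ := by
    rw [hnw]
    have : 0 < ‖z‖ := norm_pos_iff.mpr hz0
    positivity
  have hw2 : ‖w‖^2 ≤ 2/3 := by
    have : ‖w‖ ≤ π/4 := by rw [hnw]; nlinarith [Real.pi_pos]
    nlinarith [Real.pi_lt_d2, Real.pi_pos]
  have hlow : ‖w‖/3 ≤ ‖Complex.sin w‖ := by
    have h1 : ‖w‖ - ‖Complex.sin w - w‖ ≤ ‖Complex.sin w‖ := by
      have := norm_sub_norm_le w (w - Complex.sin w)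
      simp only [sub_sub_cancel] at this
      rw [norm_sub_rev] at this
      linarith
    have h2 : ‖w‖^3 = ‖w‖ * ‖w‖^2 := by ring
    nlinarith
  have hsne : Complex.sin w ≠ 0 := by
    intro hcon
    rw [hcon, norm_zero] at hlow
    linarith
  have hid : g z - 1/z^2 = (w^2 - (Complex.sin w)^2) / (z^2 * (Complex.sin w)^2) := by
    unfold g
    rw [← hw]
    field_simp
    ring
  rw [hid]
  rw [norm_div, norm_mul, norm_pow ((Complex.sin w)) 2]
  have hnum : ‖w^2 - (Complex.sin w)^2‖ ≤ 3 * ‖w‖^4 := by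
    have hfac : w^2 - (Complex.sin w)^2 = -((Complex.sin w - w) * (Complex.sin w + w)) := by
      ring
    rw [hfac, norm_neg, norm_mul]
    have hplus : ‖Complex.sin w + w‖ ≤ 3 * ‖w‖ := by
      have : Complex.sin w + w = (Complex.sin w - w) + 2*w := by ring
      rw [this]
      have hb := norm_add_le (Complex.sin w - w) (2*w)
      have h2w : ‖(2:ℂ)*w‖ = 2*‖w‖ := by
        rw [norm_mul]
        norm_num
      have hcube_le : ‖w‖^3 ≤ ‖w‖ := by
        nlinarith [pow_nonneg (norm_nonneg w) 3]
      linarith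
    calc ‖Complex.sin w - w‖ * ‖Complex.sin w + w‖ ≤ ‖w‖^3 * (3 * ‖w‖) := by
          apply mul_le_mul hcb hplus (norm_nonneg _) (pow_nonneg (norm_nonneg w) 3)
      _ = 3 * ‖w‖^4 := by ring
  have hden : ‖z‖^2 * (‖w‖/3)^2 ≤ ‖z^2‖ * ‖Complex.sin w‖^2 := by
    rw [norm_pow]
    have h1 : (‖w‖/3)^2 ≤ ‖Complex.sin w‖^2 := by
      apply sq_le_sq' _ hlow
      have := norm_nonneg (Complex.sin w)
      linarith
    have h2 : (0:ℝ) ≤ ‖z‖^2 := sq_nonneg _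
    calc ‖z‖^2 * (‖w‖/3)^2 ≤ ‖z‖^2 * ‖Complex.sin w‖^2 := by
          apply mul_le_mul_of_nonneg_left h1 h2
      _ = ‖z‖^2 * ‖Complex.sin w‖^2 := rfl
  have hzpos : (0:ℝ) < ‖z‖ := norm_pos_iff.mpr hz0
  have hdenpos : (0:ℝ) < ‖z‖^2 * (‖w‖/3)^2 := by positivity
  calc ‖w^2 - (Complex.sin w)^2‖ / (‖z^2‖ * ‖Complex.sin w‖^2)
      ≤ (3*‖w‖^4) / (‖z‖^2 * (‖w‖/3)^2) := by
        exact div_le_div₀ (by positivity) hnum hdenpos hden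
    _ = 27 * π^2 := by
        rw [hnw, div_eq_iff (by positivity : (0:ℝ) < ‖z‖^2 * ((π*‖z‖)/3)^2).ne']
        ring
  

/-- B4: bound for g far from the real axis -/
lemma g_far_bound {z : ℂ} (him : 1 ≤ |z.im|) : ‖g z‖ ≤ π^2 := by
  have him2 : ((π:ℂ) * z).im = π * z.im := by
    simp [Complex.mul_im]
  have habs : |((π:ℂ) * z).im| = π * |z.im| := by
    rw [him2, abs_mul, _root_.abs_of_pos Real.pi_pos]
  have hpi3 : (3:ℝ) ≤ π := by linarith [Real.pi_gt_three]
  have ht : (3:ℝ) ≤ |((π:ℂ) * z).im| := by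
    rw [habs]
    nlinarith [Real.pi_pos]
  have hlow := sin_lower_bound ((π:ℂ) * z)
  have hexp : (4:ℝ) ≤ Real.exp |((π:ℂ) * z).im| := by
    have := Real.add_one_le_exp |((π:ℂ) * z).im|
    linarith
  have hexp2 : Real.exp (-|((π:ℂ) * z).im|) ≤ 1 := by
    rw [Real.exp_le_one_iff]
    linarith
  have hsin1 : (1:ℝ) ≤ ‖Complex.sin ((π:ℂ) * z)‖ := by linarith
  unfold g
  rw [norm_div, norm_pow, norm_pow]
  have hpn : ‖((π:ℝ):ℂ)‖ = π := by
    rw [Complex.norm_real, Real.norm_eq_abs, _root_.abs_of_pos Real.pi_pos]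
  rw [hpn]
  have h1 : (1:ℝ) ≤ ‖Complex.sin ((π:ℂ) * z)‖^2 := by nlinarith
  calc π^2 / ‖Complex.sin ((π:ℂ) * z)‖^2 ≤ π^2 / 1 := by
        apply div_le_div₀ (sq_nonneg π) le_rfl one_pos h1
    _ = π^2 := by ring

/-- B5: bound for g on the compact core -/
lemma g_core_bound : ∃ C : ℝ, ∀ z : ℂ, 0 ≤ z.re → z.re ≤ 1 → |z.im| ≤ 1 →
    (1/4:ℝ) ≤ ‖z‖ → (1/4:ℝ) ≤ ‖z - 1‖ → ‖g z‖ ≤ C := by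
  set K : Set ℂ := {z : ℂ | 0 ≤ z.re ∧ z.re ≤ 1 ∧ |z.im| ≤ 1 ∧
    (1/4:ℝ) ≤ ‖z‖ ∧ (1/4:ℝ) ≤ ‖z - 1‖} with hK
  have hKclosed : IsClosed K := by
    apply IsClosed.inter
    · exact isClosed_le continuous_const Complex.continuous_re
    apply IsClosed.inter
    · exact isClosed_le Complex.continuous_re continuous_const
    apply IsClosed.inter
    · exact isClosed_le (continuous_abs.comp Complex.continuous_im) continuous_const
    apply IsClosed.inter
    · exact isClosed_le continuous_const continuous_norm
    · exact isClosed_le continuous_const ((continuous_id.sub continuous_const).norm)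
  have hKbdd : Bornology.IsBounded K := by
    apply Bornology.IsBounded.subset (Metric.isBounded_closedBall (x := (0:ℂ)) (r := 2))
    intro z hz
    obtain ⟨h0, h1, h2, _, _⟩ := hz
    rw [Metric.mem_closedBall, dist_zero_right]
    have := Complex.norm_le_abs_re_add_abs_im z
    have hre : |z.re| ≤ 1 := by rw [abs_le]; constructor <;> linarith
    linarith
  have hKcomp : IsCompact K := Metric.isCompact_of_isClosed_isBounded hKclosed hKbdd
  have hsne : ∀ z ∈ K, Complex.sin ((π:ℂ) * z) ≠ 0 := by
    intro z hzK
    obtain ⟨h0, h1, h2, h3, h4⟩ := hzK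
    apply notInt_iff.mp
    intro n hn
    have hre : z.re = (n:ℝ) := by rw [hn]; simp
    have hn01 : n = 0 ∨ n = 1 := by
      have hn0 : (0:ℝ) ≤ (n:ℝ) := hre ▸ h0
      have hn1 : (n:ℝ) ≤ 1 := hre ▸ h1
      have : (0:ℤ) ≤ n := by exact_mod_cast hn0
      have : n ≤ 1 := by exact_mod_cast hn1
      omega
    rcases hn01 with rfl | rfl
    · rw [hn] at h3
      simp at h3
      linarith
    · rw [hn] at h4
      simp at h4
      linarith
  have hcont : ContinuousOn g K := by
    apply ContinuousOn.div continuousOn_const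
    · exact ((Complex.continuous_sin.comp (continuous_const.mul continuous_id)).pow 2).continuousOn
    · intro z hzK
      exact pow_ne_zero 2 (hsne z hzK)
  obtain ⟨C, hC⟩ := hKcomp.exists_bound_of_continuousOn hcont
  exact ⟨C, fun z h0 h1 h2 h3 h4 => hC z ⟨h0, h1, h2, h3, h4⟩⟩

/-- the global bound for d = g - S on non-integers -/
lemma d_bound : ∃ C : ℝ, ∀ z : ℂ, (∀ n : ℤ, z ≠ (n:ℂ)) → ‖g z - S z‖ ≤ C := by
  obtain ⟨C₁, hC₁⟩ := S_bound_region
  obtain ⟨C₂, hC₂⟩ := S_near_zero_bound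
  obtain ⟨C₅, hC₅⟩ := g_core_bound
  refine ⟨max (27*π^2 + C₂) (max (C₅ + C₁) (π^2 + C₁)), fun z hz => ?_⟩
  -- reduce to the strip via periodicity
  set k : ℤ := ⌊z.re⌋ with hk
  set w : ℂ := z - k with hwdef
  have hzw : z = w + k := by rw [hwdef]; ring
  have hgper : g z = g w := by rw [hzw, g_add_int]
  have hSper : S z = S w := by rw [hzw, S_add_int]
  have hwre0 : 0 ≤ w.re := by
    rw [hwdef]
    simp only [Complex.sub_re, Complex.intCast_re]
    have := Int.floor_le z.re
    linarith
  have hwre1 : w.re < 1 := by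
    rw [hwdef]
    simp only [Complex.sub_re, Complex.intCast_re]
    have := Int.lt_floor_add_one z.re
    linarith
  have hwnotint : ∀ n : ℤ, w ≠ (n:ℂ) := by
    intro n hn
    apply hz (n + k)
    rw [hzw, hn]
    push_cast
    ring
  rw [hgper, hSper]
  -- case analysis
  by_cases hnear0 : ‖w‖ ≤ 1/4
  · -- near 0
    have hw0 : w ≠ 0 := by
      intro h0
      exact hwnotint 0 (by rw [h0]; simp)
    have h1 := g_near_zero_bound hw0 hnear0
    have h2 := hC₂ w hnear0
    have hsplit := S_split w
    have : g w - S w = (g w - 1/w^2) - ∑' n : ℤ, (if n = 0 then 0 else 1 / (w - n)^2) := by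
      rw [hsplit]; ring
    rw [this]
    refine le_trans (le_trans (norm_sub_le _ _) ?_) (le_max_left _ _)
    linarith
  by_cases hnear1 : ‖w - 1‖ ≤ 1/4
  · -- near 1 : translate by -1
    set w' : ℂ := w - 1 with hw'def
    have hgper' : g w = g w' := by
      rw [show w = w' + 1 by rw [hw'def]; ring, g_add_one]
    have hSper' : S w = S w' := by
      rw [show w = w' + 1 by rw [hw'def]; ring, S_add_one]
    have hw'0 : w' ≠ 0 := by
      intro h0
      apply hwnotint 1
      rw [hw'def] at h0
      have : w = 1 := by linear_combination h0
      rw [this]; simp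
    have h1 := g_near_zero_bound hw'0 hnear1
    have h2 := hC₂ w' hnear1
    have hsplit := S_split w'
    rw [hgper', hSper']
    have : g w' - S w' = (g w' - 1/w'^2) - ∑' n : ℤ, (if n = 0 then 0 else 1 / (w' - n)^2) := by
      rw [hsplit]; ring
    rw [this]
    refine le_trans (le_trans (norm_sub_le _ _) ?_) (le_max_left _ _)
    linarith
  -- away from 0 and 1
  push_neg at hnear0 hnear1
  have hn0 : (1/4:ℝ) ≤ ‖w‖ := hnear0.le
  have hn1 : (1/4:ℝ) ≤ ‖w - 1‖ := hnear1.le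
  have hS := hC₁ w hwre0 hwre1.le hn0 hn1
  by_cases him : |w.im| ≤ 1
  · have hg := hC₅ w hwre0 hwre1.le him hn0 hn1
    refine le_trans (le_trans (norm_sub_le _ _) ?_)
      (le_trans (le_max_left _ _) (le_max_right _ _))
    linarith
  · push_neg at him
    have hg := g_far_bound him.le
    refine le_trans (le_trans (norm_sub_le _ _) ?_)
      (le_trans (le_max_right _ _) (le_max_right _ _))
    linarith

/-- The main classical identity: S z = π²/sin²(πz) for z ∉ ℤ. -/
theorem S_eq_g {z : ℂ} (hz : ∀ n : ℤ, z ≠ (n:ℂ)) : S z = g z := by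
  obtain ⟨C, hC⟩ := d_bound
  set Ω : Set ℂ := {z : ℂ | ∀ n : ℤ, z ≠ (n:ℂ)} with hΩ
  set D : Set ℝ := (fun z => ‖g z - S z‖) '' Ω with hD
  have hhalf_mem : (1/2 : ℂ) ∈ Ω := by
    intro n hn
    have h2 : (1:ℂ) = 2 * n := by linear_combination 2 * hn
    have h3 : (1:ℤ) = 2 * n := by exact_mod_cast h2
    omega
  have hDne : D.Nonempty := ⟨_, Set.mem_image_of_mem _ hhalf_mem⟩
  have hDbdd : BddAbove D := by
    refine ⟨C, fun y hy => ?_⟩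
    obtain ⟨x, hx, rfl⟩ := hy
    exact hC x hx
  set M : ℝ := sSup D with hM
  have hle : ∀ x ∈ Ω, ‖g x - S x‖ ≤ M := fun x hx =>
    le_csSup hDbdd (Set.mem_image_of_mem _ hx)
  have hhalf : ∀ x ∈ Ω, ‖g x - S x‖ ≤ M/2 := by
    intro x hx
    have hx2 : x/2 ∈ Ω := by
      intro n hn
      apply hx (2*n)
      rw [div_eq_iff (two_ne_zero : (2:ℂ) ≠ 0)] at hn
      rw [hn]; push_cast; ring
    have hx2' : (x+1)/2 ∈ Ω := by
      intro n hn
      apply hx (2*n - 1)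
      rw [div_eq_iff (two_ne_zero : (2:ℂ) ≠ 0)] at hn
      push_cast
      linear_combination hn
    have hdup : 4 * (g x - S x) = (g (x/2) - S (x/2)) + (g ((x+1)/2) - S ((x+1)/2)) := by
      have h1 := g_duplication hx
      have h2 := S_duplication x
      linear_combination h2 - h1
    have hnorm4 : (4:ℝ) * ‖g x - S x‖ = ‖4 * (g x - S x)‖ := by
      rw [norm_mul]
      norm_num
    have hb := norm_add_le (g (x/2) - S (x/2)) (g ((x+1)/2) - S ((x+1)/2))
    rw [← hdup, ← hnorm4] at hb
    have := hle _ hx2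
    have := hle _ hx2'
    linarith
  have hM0 : 0 ≤ M := le_trans (norm_nonneg _) (hle _ hhalf_mem)
  have hM2 : M ≤ M/2 := by
    apply csSup_le hDne
    intro y hy
    obtain ⟨x, hx, rfl⟩ := hy
    exact hhalf x hx
  have hMz : M ≤ 0 := by linarith
  have hz0 : ‖g z - S z‖ ≤ 0 := le_trans (hle z hz) hMz
  have : g z - S z = 0 := norm_le_zero_iff.mp hz0
  linear_combination -this


lemma summable_ite_zero {f : ℤ → ℂ} (hf : Summable f) :
    Summable (fun n : ℤ => if n = 0 then 0 else f n) := by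
  have h := hf.sub (hasSum_ite_eq (0:ℤ) (f 0)).summable
  apply h.congr
  intro n
  by_cases hn : n = 0 <;> simp [hn]

lemma tsum_ite_zero_eq {f : ℤ → ℂ} (hf : Summable f) :
    ∑' n : ℤ, (if n = 0 then 0 else f n) = (∑' n : ℤ, f n) - f 0 := by
  rw [Summable.tsum_eq_add_tsum_ite hf 0]
  ring

/-- Basel over ℤ: ∑_{n ≠ 0} 1/n² = π²/3 in ℂ -/
lemma hasSum_basel_int :
    HasSum (fun n : ℤ => if n = 0 then (0:ℂ) else 1/(n:ℂ)^2) ((π:ℂ)^2/3) := by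
  have hR : HasSum (fun n : ℕ => ((1:ℝ)/(n:ℝ)^2)) (π^2/6) := hasSum_zeta_two
  have hC : HasSum (fun n : ℕ => (1:ℂ)/(n:ℂ)^2) ((π:ℂ)^2/6) := by
    have h := hasSum_ofReal.mpr hR
    have heq : (fun n : ℕ => (((1:ℝ)/(n:ℝ)^2 : ℝ) : ℂ)) = (fun n : ℕ => (1:ℂ)/(n:ℂ)^2) := by
      funext n
      push_cast
      ring
    have hval : ((π^2/6 : ℝ) : ℂ) = (π:ℂ)^2/6 := by push_cast; ring
    rwa [heq, hval] at h
  have hpos : HasSum (fun n : ℕ => if ((n:ℤ)) = 0 then (0:ℂ) else 1/(((n:ℤ)):ℂ)^2)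
      ((π:ℂ)^2/6) := by
    apply hC.congr_fun
    intro n
    by_cases hn : n = 0
    · subst hn; simp
    · have : ((n:ℤ)) ≠ 0 := by exact_mod_cast hn
      simp only [this, if_false]
      push_cast
      ring
  have hneg : HasSum (fun n : ℕ => if ((-(n+1) : ℤ)) = 0 then (0:ℂ)
      else 1/(((-(n+1) : ℤ)):ℂ)^2) ((π:ℂ)^2/6) := by
    have hshift : HasSum (fun n : ℕ => (1:ℂ)/((n+1:ℕ):ℂ)^2) ((π:ℂ)^2/6) := by
      have := (hasSum_nat_add_iff (f := fun n : ℕ => (1:ℂ)/(n:ℂ)^2) 1).mpr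
        (by simpa using hC)
      simpa using this
    apply hshift.congr_fun
    intro n
    have hne : ((-(n+1) : ℤ)) ≠ 0 := by omega
    simp only [hne, if_false]
    push_cast
    ring_nf
  have hsum := HasSum.of_nat_of_neg_add_one
    (f := fun n : ℤ => if n = 0 then (0:ℂ) else 1/(n:ℂ)^2) hpos hneg
  have hval2 : (π:ℂ)^2/6 + (π:ℂ)^2/6 = (π:ℂ)^2/3 := by ring
  rwa [hval2] at hsum


lemma tendsto_one_div_sq_zero {α : Type*} {l : Filter α} {f : α → ℂ}
    (hf : Filter.Tendsto (fun a => ‖f a‖) l Filter.atTop) :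
    Filter.Tendsto (fun a => 1/(f a)^2) l (nhds 0) := by
  rw [tendsto_zero_iff_norm_tendsto_zero]
  have heq : (fun a => ‖1/(f a)^2‖) = fun a => (‖f a‖^2)⁻¹ := by
    funext a
    rw [norm_one_div_sq, one_div]
  rw [heq]
  have h2 : Filter.Tendsto (fun a => ‖f a‖^2) l Filter.atTop :=
    (tendsto_pow_atTop (by norm_num : (2:ℕ) ≠ 0)).comp hf
  exact h2.inv_tendsto_atTop

end WpLim


/-- The lattice point m + n·τ indexed by a pair of integers. -/
noncomputable def latticePt (τ : ℂ) (p : ℤ × ℤ) : ℂ := (p.1 : ℂ) + (p.2 : ℂ) * τ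

/-- Membership in the lattice Λ_τ = ℤ + ℤτ. -/
def inLattice (τ z : ℂ) : Prop := ∃ m n : ℤ, z = (m : ℂ) + (n : ℂ) * τ

/-- The Weierstrass ℘ function of the lattice Λ_τ. -/
noncomputable def wp (τ z : ℂ) : ℂ :=
  1 / z ^ 2 + ∑' p : ℤ × ℤ, if p = 0 then 0 else
    (1 / (z - latticePt τ p) ^ 2 - 1 / (latticePt τ p) ^ 2)

/-- The modular invariant g₂(τ) = 60 Σ ω⁻⁴. -/
noncomputable def g2 (τ : ℂ) : ℂ :=
  60 * ∑' p : ℤ × ℤ, if p = 0 then 0 else 1 / (latticePt τ p) ^ 4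

/-- The modular invariant g₃(τ) = 140 Σ ω⁻⁶. -/
noncomputable def g3 (τ : ℂ) : ℂ :=
  140 * ∑' p : ℤ × ℤ, if p = 0 then 0 else 1 / (latticePt τ p) ^ 6

/-- The Weierstrass zeta function of the lattice Λ_τ. -/
noncomputable def wzeta (τ z : ℂ) : ℂ :=
  1 / z + ∑' p : ℤ × ℤ, if p = 0 then 0 else
    (1 / (z - latticePt τ p) + 1 / latticePt τ p + z / (latticePt τ p) ^ 2)

/-- As Im τ → ∞ with |Re τ| ≤ 1/2, ℘(τ; z) → π²/sin²(πz) − π²/3, for fixed z ∉ ℤ. -/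
theorem wp_limit_at_i_infty (z : ℂ) (hz : ∀ n : ℤ, z ≠ (n : ℂ)) :
    Filter.Tendsto (fun τ : ℂ => wp τ z)
      (Filter.comap Complex.im Filter.atTop ⊓ Filter.principal {τ : ℂ | |τ.re| ≤ 1 / 2})
      (nhds ((π : ℂ) ^ 2 / Complex.sin ((π : ℂ) * z) ^ 2 - (π : ℂ) ^ 2 / 3)) := by
  classical
  set l : Filter ℂ := Filter.comap Complex.im Filter.atTop ⊓
    Filter.principal {τ : ℂ | |τ.re| ≤ 1 / 2} with hl
  set F : ℂ → ℤ × ℤ → ℂ := fun τ p => if p = 0 then 0 else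
    (1 / (z - latticePt τ p) ^ 2 - 1 / (latticePt τ p) ^ 2) with hF
  set G : ℤ × ℤ → ℂ := fun p => if p = 0 then 0 else if p.2 = 0 then
    (1 / (z - p.1) ^ 2 - 1 / (p.1 : ℂ) ^ 2) else 0 with hG
  set row : ℤ → ℂ := fun m => if m = 0 then 0 else
    (1 / (z - m) ^ 2 - 1 / (m : ℂ) ^ 2) with hrow
  have hrow_s1 : Summable (fun m : ℤ => if m = 0 then (0:ℂ) else 1/(z - m)^2) :=
    WpLim.summable_ite_zero (WpLim.summable_row z)
  have hrow_s2 : Summable (fun m : ℤ => if m = 0 then (0:ℂ) else 1/(m:ℂ)^2) :=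
    WpLim.hasSum_basel_int.summable
  have hrow_sum : Summable row := by
    apply (hrow_s1.sub hrow_s2).congr
    intro m
    by_cases hm : m = 0 <;> simp [hrow, hm]
  have hGrow : ∀ m : ℤ, G (m, 0) = row m := by
    intro m
    by_cases hm : m = 0
    · subst hm; simp [hG, hrow, Prod.ext_iff]
    · have : ((m, 0) : ℤ × ℤ) ≠ 0 := by simp [Prod.ext_iff, hm]
      simp [hG, hrow, this, hm]
  have hinj : Function.Injective (fun m : ℤ => ((m, 0) : ℤ × ℤ)) := by
    intro a b h
    simpa [Prod.ext_iff] using h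
  have hsupp : Function.support G ⊆ Set.range (fun m : ℤ => ((m, 0) : ℤ × ℤ)) := by
    intro p hp
    rcases eq_or_ne p.2 0 with h2 | h2
    · exact ⟨p.1, by rw [Prod.ext_iff]; exact ⟨rfl, h2.symm⟩⟩
    · exfalso
      apply hp
      have hp0 : p ≠ 0 := fun h => h2 (by rw [h]; rfl)
      simp [hG, hp0, h2]
  have htsumG : ∑' p : ℤ × ℤ, G p = ∑' m : ℤ, row m := by
    rw [← hinj.tsum_eq hsupp]
    exact tsum_congr hGrow
  have hGnorm_sum : Summable (fun p : ℤ × ℤ => ‖G p‖) := by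
    apply (hinj.summable_iff ?_).mp
    · apply hrow_sum.norm.congr
      intro m
      simp only [Function.comp_apply]
      rw [hGrow]
    · intro p hp
      have h2 : p.2 ≠ 0 := by
        intro h2
        exact hp ⟨p.1, by rw [Prod.ext_iff]; exact ⟨rfl, h2.symm⟩⟩
      have hp0 : p ≠ 0 := fun h => h2 (by rw [h]; rfl)
      simp [hG, hp0, h2]
  set r₀ : ℝ := EisensteinSeries.r ⟨⟨1/2, 2⟩, two_pos⟩ with hr₀
  have hr₀pos : 0 < r₀ := EisensteinSeries.r_pos _
  set B : ℤ × ℤ → ℝ := fun p =>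
    ‖G p‖ + (12 * ‖z‖ / r₀^3) * ‖(![p.2, p.1] : Fin 2 → ℤ)‖^(-(3:ℝ)) with hB
  have hvinj : Function.Injective (fun p : ℤ × ℤ => (![p.2, p.1] : Fin 2 → ℤ)) := by
    intro a b h
    have h0 := congrFun h 0
    have h1 := congrFun h 1
    simp only [Matrix.cons_val_zero, Matrix.cons_val_one, Matrix.head_cons] at h0 h1
    exact Prod.ext h1 h0
  have hBsum : Summable B := by
    apply hGnorm_sum.add
    apply Summable.mul_left
    exact (EisensteinSeries.summable_one_div_norm_rpow
      (by norm_num : (2:ℝ) < 3)).comp_injective hvinj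
  have hBnn : ∀ p : ℤ × ℤ,
      0 ≤ (12 * ‖z‖ / r₀^3) * ‖(![p.2, p.1] : Fin 2 → ℤ)‖^(-(3:ℝ)) := by
    intro p
    exact mul_nonneg (by positivity) (Real.rpow_nonneg (norm_nonneg _) _)
  have hIm : Filter.Tendsto Complex.im l Filter.atTop :=
    Filter.tendsto_comap.mono_left inf_le_left
  have hlat_im : ∀ (τ : ℂ) (p : ℤ × ℤ), (latticePt τ p).im = (p.2 : ℝ) * τ.im := by
    intro τ p
    simp [latticePt, Complex.add_im, Complex.mul_im]
  have hp2abs : ∀ p : ℤ × ℤ, p.2 ≠ 0 → (1:ℝ) ≤ |(p.2 : ℝ)| := by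
    intro p hp2
    rw [← Int.cast_abs]
    exact_mod_cast (by rw [Int.abs_eq_natAbs]; omega : (1:ℤ) ≤ |p.2|)
  have hFG : ∀ (p : ℤ × ℤ), p ≠ 0 → p.2 = 0 → ∀ τ : ℂ, F τ p = G p := by
    intro p hp0 hp2 τ
    have hlat : latticePt τ p = (p.1 : ℂ) := by
      simp [latticePt, hp2]
    simp only [hF, hG, if_neg hp0, if_pos hp2, hlat]
  have hpoint : ∀ p : ℤ × ℤ, Filter.Tendsto (fun τ => F τ p) l (nhds (G p)) := by
    intro p
    by_cases hp0 : p = 0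
    · subst hp0
      simp only [hF, hG, if_pos rfl]
      exact tendsto_const_nhds
    by_cases hp2 : p.2 = 0
    · rw [show (fun τ : ℂ => F τ p) = fun _ => G p from funext (hFG p hp0 hp2)]
      exact tendsto_const_nhds
    · have hGp : G p = 0 := by simp [hG, hp0, hp2]
      rw [hGp]
      have hnorm_lat : Filter.Tendsto (fun τ : ℂ => ‖latticePt τ p‖) l Filter.atTop := by
        apply Filter.tendsto_atTop_mono' l ?_ hIm
        filter_upwards [hIm.eventually_ge_atTop 0] with τ hτ
        have h1 : |(latticePt τ p).im| ≤ ‖latticePt τ p‖ := by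
          exact Complex.abs_im_le_norm _
        rw [hlat_im, abs_mul] at h1
        have h2 := hp2abs p hp2
        nlinarith [le_abs_self τ.im, abs_nonneg τ.im]
      have h2 : Filter.Tendsto (fun τ : ℂ => ‖z - latticePt τ p‖) l Filter.atTop := by
        apply Filter.tendsto_atTop_mono' l ?_
          (Filter.tendsto_atTop_add_const_right l (-‖z‖) hnorm_lat)
        filter_upwards with τ
        have h3 := norm_sub_norm_le (latticePt τ p) z
        rw [norm_sub_rev (latticePt τ p) z] at h3
        linarith
      have h3 := (WpLim.tendsto_one_div_sq_zero h2).sub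
        (WpLim.tendsto_one_div_sq_zero hnorm_lat)
      rw [sub_zero] at h3
      apply h3.congr
      intro τ
      simp only [hF, if_neg hp0]
  have hbound : ∀ᶠ τ in l, ∀ p : ℤ × ℤ, ‖F τ p‖ ≤ B p := by
    have hre : ∀ᶠ τ in l, |τ.re| ≤ 1/2 := by
      rw [hl]
      exact Filter.eventually_inf_principal.mpr (Filter.Eventually.of_forall fun τ h => h)
    filter_upwards [hIm.eventually_ge_atTop (max 2 (2*‖z‖+2)), hre] with τ hT hre2
    intro p
    by_cases hp0 : p = 0
    · subst hp0
      simp only [hF, if_pos rfl, norm_zero, hB]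
      exact add_nonneg (norm_nonneg _) (hBnn 0)
    by_cases hp2 : p.2 = 0
    · rw [hFG p hp0 hp2 τ, hB]
      exact le_add_of_nonneg_right (hBnn p)
    · have hT2 : (2:ℝ) ≤ τ.im := le_trans (le_max_left _ _) hT
      have hTz : 2*‖z‖+2 ≤ τ.im := le_trans (le_max_right _ _) hT
      have hτpos : 0 < τ.im := lt_of_lt_of_le two_pos hT2
      set ω : ℂ := latticePt τ p with hω
      set x : Fin 2 → ℤ := ![p.2, p.1] with hx
      have hx0 : x ≠ 0 := by
        intro h
        apply hp2
        have h0 := congrFun h 0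
        simpa [hx] using h0
      have hxpos : (0:ℝ) < ‖x‖ := norm_pos_iff.mpr hx0
      set τ' : UpperHalfPlane := ⟨τ, hτpos⟩ with hτ'
      have hrle : r₀ ≤ EisensteinSeries.r τ' := by
        apply EisensteinSeries.r_lower_bound_on_verticalStrip τ' two_pos
        exact ⟨hre2, hT2⟩
      have hωx : ((x 0 : ℤ) : ℂ) * (τ' : ℂ) + ((x 1 : ℤ) : ℂ) = ω := by
        simp only [hx, hω, Matrix.cons_val_zero, Matrix.cons_val_one, Matrix.head_cons]
        rw [show ((τ' : ℂ)) = τ from rfl]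
        simp [latticePt]
        ring
      have hωlow : r₀ * ‖x‖ ≤ ‖ω‖ := by
        calc r₀ * ‖x‖ ≤ EisensteinSeries.r τ' * ‖x‖ :=
              mul_le_mul_of_nonneg_right hrle (norm_nonneg _)
          _ ≤ ‖((x 0 : ℤ) * (τ' : ℂ) + (x 1 : ℤ))‖ :=
              EisensteinSeries.r_mul_max_le τ' hx0
          _ = ‖ω‖ := by rw [hωx]
      have hω2z : 2*‖z‖+2 ≤ ‖ω‖ := by
        have h1 : |ω.im| ≤ ‖ω‖ := by
          exact Complex.abs_im_le_norm _
        rw [hω, hlat_im, abs_mul, _root_.abs_of_pos hτpos] at h1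
        have h2 := hp2abs p hp2
        nlinarith [norm_nonneg z]
      have hωpos : (0:ℝ) < ‖ω‖ := by nlinarith [norm_nonneg z]
      have hωne : ω ≠ 0 := norm_pos_iff.mp hωpos
      have hzω : ‖ω‖/2 + 1 ≤ ‖z - ω‖ := by
        have h3 := norm_sub_norm_le ω z
        rw [norm_sub_rev] at h3
        linarith
      have hzωpos : (0:ℝ) < ‖z - ω‖ := by linarith
      have hzωne : z - ω ≠ 0 := norm_pos_iff.mp hzωpos
      have hFval : F τ p = z * (2*ω - z) / ((z - ω)^2 * ω^2) := by
        simp only [hF, if_neg hp0, ← hω]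
        field_simp
        ring
      rw [hFval]
      have hGp : G p = 0 := by simp [hG, hp0, hp2]
      have hnum : ‖z * (2*ω - z)‖ ≤ ‖z‖ * (3 * ‖ω‖) := by
        rw [norm_mul]
        apply mul_le_mul_of_nonneg_left ?_ (norm_nonneg z)
        have h4 := norm_sub_le (2*ω) z
        have h5 : ‖(2:ℂ)*ω‖ = 2*‖ω‖ := by
          rw [norm_mul]
          norm_num
        have hz_le : ‖z‖ ≤ ‖ω‖ := by linarith
        linarith
      have hden : (‖ω‖/2)^2 * ‖ω‖^2 ≤ ‖(z - ω)^2 * ω^2‖ := by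
        rw [norm_mul, norm_pow, norm_pow]
        have h6 : (‖ω‖/2)^2 ≤ ‖z - ω‖^2 := by nlinarith
        nlinarith [sq_nonneg ‖ω‖]
      calc ‖z * (2*ω - z) / ((z - ω)^2 * ω^2)‖
          = ‖z * (2*ω - z)‖ / ‖(z - ω)^2 * ω^2‖ := norm_div _ _
        _ ≤ (‖z‖ * (3 * ‖ω‖)) / ((‖ω‖/2)^2 * ‖ω‖^2) :=
            div_le_div₀ (by positivity) hnum (by positivity) hden
        _ = 12 * ‖z‖ / ‖ω‖^3 := by
            rw [div_eq_div_iff (by positivity) (by positivity)]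
            ring
        _ ≤ 12 * ‖z‖ / (r₀ * ‖x‖)^3 := by
            have hle3 : (r₀ * ‖x‖)^3 ≤ ‖ω‖^3 :=
              pow_le_pow_left₀ (mul_nonneg hr₀pos.le (norm_nonneg x)) hωlow 3
            exact div_le_div₀ (by positivity) le_rfl (by positivity) hle3
        _ = B p := by
            rw [hB]
            simp only
            rw [hGp, norm_zero, zero_add]
            have hx3 : ‖x‖^(-(3:ℝ)) = (‖x‖^(3:ℕ))⁻¹ := by
              rw [Real.rpow_neg (norm_nonneg _), show (3:ℝ) = ((3:ℕ):ℝ) by norm_num,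
                Real.rpow_natCast]
            rw [← hx, hx3, mul_pow, ← div_div, div_eq_mul_inv (12 * ‖z‖ / r₀^3)]
  have htends := tendsto_tsum_of_dominated_convergence hBsum hpoint hbound
  have hwp : ∀ τ : ℂ, wp τ z = 1/z^2 + ∑' p : ℤ × ℤ, F τ p := by
    intro τ
    rfl
  have hval : 1/z^2 + ∑' p : ℤ × ℤ, G p =
      (π:ℂ)^2/Complex.sin ((π:ℂ)*z)^2 - (π:ℂ)^2/3 := by
    rw [htsumG]
    have hsub : ∑' m : ℤ, row m =
        (∑' m : ℤ, (if m = 0 then (0:ℂ) else 1/(z - m)^2))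
        - ∑' m : ℤ, (if m = 0 then (0:ℂ) else 1/(m:ℂ)^2) := by
      rw [← Summable.tsum_sub hrow_s1 hrow_s2]
      apply tsum_congr
      intro m
      by_cases hm : m = 0 <;> simp [hrow, hm]
    have hS := WpLim.S_split z
    have hSg := WpLim.S_eq_g hz
    rw [hsub, WpLim.hasSum_basel_int.tsum_eq]
    have hgdef : WpLim.g z = (π:ℂ)^2/Complex.sin ((π:ℂ)*z)^2 := rfl
    rw [← hgdef, ← hSg]
    linear_combination -hS
  rw [show (nhds ((π:ℂ)^2/Complex.sin ((π:ℂ)*z)^2 - (π:ℂ)^2/3)) =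
    nhds (1/z^2 + ∑' p : ℤ × ℤ, G p) by rw [hval]]
  have hfinal := (tendsto_const_nhds (x := (1:ℂ)/z^2) (f := l)).add htends
  apply hfinal.congr
  intro τ
  exact (hwp τ).symm
end
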